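/- arXiv:math/0405349 — 5 statements merged into one kernel-verified Lean document; each statement's English description precedes it below -/
import Mathlib

section
/- For positive integers d_1,...,d_{n-1} and the Tits lattice L = L(1,d_1,...,d_1⋯d_{n-1}), every positive semi-definite symmetric integer n×n matrix C satisfies (d_1⋯d_{n-1})·C ∈ L, and d_1⋯d_{n-1} is the least positive integer λ with the property that λC ∈ L for all positive semi-definite symmetric integer matrices C. -/
open Matrix in


/-- For the Tits lattice `L = L(1, d₁, …, d₁⋯d_{n-1})`,
the number `d₁⋯d_{n-1}` is the least positive integer `λ` such that `λ·C ∈ L`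
for every positive semi-definite symmetric integer matrix `C`. -/
theorem titsLattice_nu (n : ℕ) (hn : 1 ≤ n) (d : ℕ → ℕ) (hd : ∀ i, 0 < d i) :
    IsLeast {lam : ℕ | 0 < lam ∧
      ∀ C : Matrix (Fin n) (Fin n) ℤ, C.IsSymm →
        (C.map ((↑) : ℤ → ℝ)).PosSemidef →
        ∀ i j : Fin n,
          ((∏ k ∈ Finset.range (max i.val j.val), d k : ℕ) : ℤ) ∣ (lam : ℤ) * C i j}
      (∏ i ∈ Finset.range (n - 1), d i) := by
  constructor
  · refine ⟨Finset.prod_pos fun i _ => hd i, fun C _ _ i j => ?_⟩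
    refine dvd_mul_of_dvd_left ?_ _
    have hsub : Finset.range (max i.val j.val) ⊆ Finset.range (n - 1) := by
      intro k hk
      simp only [Finset.mem_range] at *
      have hi := i.isLt
      have hj := j.isLt
      omega
    exact_mod_cast Finset.prod_dvd_prod_of_subset _ _ d hsub
  · rintro lam ⟨hlam, h⟩
    set C : Matrix (Fin n) (Fin n) ℤ := Matrix.of fun _ _ => 1 with hC
    have hsymm : C.IsSymm := by
      ext i j; simp [hC, Matrix.transpose]
    have hpsd : (C.map ((↑) : ℤ → ℝ)).PosSemidef := by
      rw [Matrix.posSemidef_iff_dotProduct_mulVec]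
      constructor
      · ext i j; simp [hC, Matrix.transpose, Matrix.conjTranspose, Matrix.map]
      · intro x
        have hmv : (C.map ((↑) : ℤ → ℝ)) *ᵥ x = fun _ => ∑ j, x j := by
          ext i
          simp [Matrix.mulVec, dotProduct, hC, Matrix.map]
        rw [hmv]
        have : star x ⬝ᵥ (fun _ : Fin n => ∑ j, x j) = (∑ j, x j) * (∑ j, x j) := by
          simp [dotProduct, ← Finset.sum_mul]
        rw [this]
        exact mul_self_nonneg _
    have key := h C hsymm hpsd ⟨0, by omega⟩ ⟨n - 1, by omega⟩
    simp only [hC, Matrix.of_apply, mul_one] at key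
    have : (∏ k ∈ Finset.range (n - 1), d k) ∣ lam := by
      have : max 0 (n - 1) = n - 1 := by omega
      rw [this] at key
      exact_mod_cast key
    exact Nat.le_of_dvd hlam this
end

section
/- Let L = L(1,17) be the lattice of symmetric 2×2 integer matrices ((a,b),(b,c)) with 17 | b and 17 | c, and let f be the quadratic form with matrix ((3, -14/17), (-14/17, 4/17)). Then the minimum of tr(f·h) over all rank-1 positive semi-definite matrices h ∈ L equals 3, while the positive definite matrix h₀ = ((6,17),(17,51)) lies in L and satisfies tr(f·h₀) = 2. In particular, min over all nonzero positive semi-definite h ∈ L of tr(f·h) is strictly smaller than the minimum over rank-1 elements of L. -/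
lemma one_le_sq {a : ℤ} (h : a ≠ 0) : 1 ≤ a ^ 2 := by
  rcases h.lt_or_gt with h|h <;> nlinarith

lemma keyQ1 {x y : ℤ} (h : x ≠ 0 ∨ y ≠ 0) : 3 ≤ 51*x^2 - 28*x*y + 4*y^2 := by
  rcases eq_or_ne x 0 with rfl|hx
  · have hy : y ≠ 0 := h.resolve_left (by simp)
    have := one_le_sq hy; nlinarith
  · rcases eq_or_ne x 1 with rfl | h1
    · have h7 : (7*1-2*y : ℤ) ≠ 0 := by omega
      have := one_le_sq h7; nlinarith
    · rcases eq_or_ne x (-1) with rfl | h2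
      · have h7 : (7*(-1)-2*y : ℤ) ≠ 0 := by omega
        have := one_le_sq h7; nlinarith
      · have habs : 2 ≤ |x| := by
          rcases abs_cases x with ⟨h', _⟩|⟨h', _⟩ <;> omega
        have hx4 : 4 ≤ x^2 := by nlinarith [sq_abs x]
        nlinarith [sq_nonneg (7*x-2*y)]

lemma keyQ2 {x z : ℤ} (h : x ≠ 0 ∨ z ≠ 0) : 3 ≤ 3*x^2 - 28*x*z + 68*z^2 := by
  have h9 : 9 ≤ (3*x-14*z)^2 + 8*z^2 := by
    rcases eq_or_ne z 0 with rfl|hz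
    · have hx : x ≠ 0 := h.resolve_right (by simp)
      have := one_le_sq hx; nlinarith
    · rcases eq_or_ne z 1 with rfl | h1
      · have h7 : (3*x-14*1 : ℤ) ≠ 0 := by omega
        have := one_le_sq h7; nlinarith
      · rcases eq_or_ne z (-1) with rfl | h2
        · have h7 : (3*x-14*(-1) : ℤ) ≠ 0 := by omega
          have := one_le_sq h7; nlinarith
        · have habs : 2 ≤ |z| := by
            rcases abs_cases z with ⟨h', _⟩|⟨h', _⟩ <;> omega
          have hz4 : 4 ≤ z^2 := by nlinarith [sq_abs z]
          nlinarith [sq_nonneg (3*x-14*z)]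
  linarith


lemma decomp {a b c : ℤ} (ha : 0 ≤ a) (hc : 0 ≤ c) (hd : a * c = b ^ 2) :
    ∃ g x y : ℤ, 0 ≤ g ∧ a = g * x^2 ∧ b = g * (x * y) ∧ c = g * y^2 := by
  rcases eq_or_ne a 0 with rfl|ha0
  · have hb : b = 0 := by nlinarith [sq_nonneg b]
    exact ⟨c, 0, 1, hc, by ring, by simp [hb], by ring⟩
  rcases eq_or_ne c 0 with rfl|hc0
  · have hb : b = 0 := by nlinarith [sq_nonneg b]
    exact ⟨a, 1, 0, ha, by ring, by simp [hb], by ring⟩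
  · set g : ℤ := (Int.gcd a c : ℤ) with hgdef
    have hgpos : 0 < g := by
      have : Int.gcd a c ≠ 0 := fun H => ha0 (Int.gcd_eq_zero_iff.mp H).1
      have h0 : 0 < Int.gcd a c := Nat.pos_of_ne_zero this
      rw [hgdef]; exact_mod_cast h0
    have hga : g ∣ a := Int.gcd_dvd_left a c
    have hgc : g ∣ c := Int.gcd_dvd_right a c
    obtain ⟨A, hA⟩ := hga
    obtain ⟨C, hC⟩ := hgc
    have hcop : IsCoprime A C := by
      rw [Int.isCoprime_iff_gcd_eq_one]
      have hgn : 0 < Int.gcd a c := by rw [hgdef] at hgpos; exact_mod_cast hgpos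
      have := Int.gcd_div_gcd_div_gcd hgn
      have hA' : A = a / g := by rw [hA, Int.mul_ediv_cancel_left _ hgpos.ne']
      have hC' : C = c / g := by rw [hC, Int.mul_ediv_cancel_left _ hgpos.ne']
      rw [hA', hC']; exact this
    have hgb : g ∣ b := by
      rw [← Int.pow_dvd_pow_iff (two_ne_zero)]
      exact ⟨A * C, by rw [← hd, hA, hC]; ring⟩
    obtain ⟨B, hB⟩ := hgb
    have hAC : A * C = B ^ 2 := by
      have h2 : g ^ 2 * (A * C) = g ^ 2 * B ^ 2 := by
        have : a * c = (g*B)^2 := by rw [← hB]; exact hd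
        rw [hA, hC] at this; linarith [this]
      exact mul_left_cancel₀ (pow_ne_zero 2 hgpos.ne') h2
    have hApos : 0 < A := by
      rcases lt_trichotomy A 0 with h'|h'|h'
      · nlinarith [hA ▸ ha]
      · exact absurd (by rw [hA, h', mul_zero]) ha0
      · exact h'
    have hCpos : 0 < C := by
      rcases lt_trichotomy C 0 with h'|h'|h'
      · nlinarith [hC ▸ hc]
      · exact absurd (by rw [hC, h', mul_zero]) hc0
      · exact h'
    obtain ⟨x, hx⟩ := Int.sq_of_isCoprime hcop hAC
    have hAx : A = x ^ 2 := by
      rcases hx with h'|h'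
      · exact h'
      · nlinarith
    have hxne : x ≠ 0 := by rintro rfl; simp [hAx] at hApos
    have hxB : x ∣ B := by
      rw [← Int.pow_dvd_pow_iff (two_ne_zero)]
      exact ⟨C, by rw [← hAC, hAx]⟩
    obtain ⟨y, hy⟩ := hxB
    have hCy : C = y ^ 2 := by
      have h2 : x^2 * C = x^2 * y^2 := by
        calc x^2 * C = A * C := by rw [hAx]
        _ = B^2 := hAC
        _ = x^2 * y^2 := by rw [hy]; ring
      exact mul_left_cancel₀ (pow_ne_zero 2 hxne) h2
    exact ⟨g, x, y, hgpos.le, by rw [hA, hAx], by rw [hB, hy], by rw [hC, hCy]⟩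



lemma trace_formula (h : Matrix (Fin 2) (Fin 2) ℤ) :
    Matrix.trace ((!![3, -14/17; -14/17, 4/17] : Matrix (Fin 2) (Fin 2) ℝ) * h.map ((↑) : ℤ → ℝ)) =
      3 * (h 0 0 : ℝ) - (14/17) * (h 0 1 : ℝ) - (14/17) * (h 1 0 : ℝ) + (4/17) * (h 1 1 : ℝ) := by
  simp [Matrix.trace, Matrix.mul_apply, Fin.sum_univ_two, Matrix.map_apply, Matrix.diag]
  ring

lemma psd_entries (h : Matrix (Fin 2) (Fin 2) ℤ)
    (hpsd : (h.map ((↑) : ℤ → ℝ)).PosSemidef) : 0 ≤ h 0 0 ∧ 0 ≤ h 1 1 := by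
  constructor
  · have := hpsd.dotProduct_mulVec_nonneg (Pi.single 0 1)
    simp [dotProduct, Matrix.mulVec, Fin.sum_univ_two, Matrix.map_apply, Pi.single_apply] at this
    exact_mod_cast this
  · have := hpsd.dotProduct_mulVec_nonneg (Pi.single 1 1)
    simp [dotProduct, Matrix.mulVec, Fin.sum_univ_two, Matrix.map_apply, Pi.single_apply] at this
    exact_mod_cast this


/-- Counterexample to the Barnes–Cohn inequality for `L = L(1,17)`:
for the form `f` with matrix `((3, -14/17), (-14/17, 4/17))`, the minimum of `tr(f·h)`
over rank-1 positive semi-definite `h ∈ L` equals `3`, while the matrix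
`h₀ = ((6,17),(17,51)) ∈ L` is positive semi-definite, nonzero, and satisfies
`tr(f·h₀) = 2 < 3`. -/
theorem counterexample_barnes_cohn :
    let f : Matrix (Fin 2) (Fin 2) ℝ := !![3, -14/17; -14/17, 4/17]
    let Lmem : Matrix (Fin 2) (Fin 2) ℤ → Prop :=
      fun h => h 0 1 = h 1 0 ∧ (17 : ℤ) ∣ h 0 1 ∧ (17 : ℤ) ∣ h 1 1
    (IsLeast {t : ℝ | ∃ h : Matrix (Fin 2) (Fin 2) ℤ, Lmem h ∧
        (h.map ((↑) : ℤ → ℝ)).PosSemidef ∧ h ≠ 0 ∧ h.det = 0 ∧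
        t = Matrix.trace (f * h.map ((↑) : ℤ → ℝ))} 3) ∧
    (Lmem !![6, 17; 17, 51] ∧
      ((!![6, 17; 17, 51] : Matrix (Fin 2) (Fin 2) ℤ).map ((↑) : ℤ → ℝ)).PosSemidef ∧
      (!![6, 17; 17, 51] : Matrix (Fin 2) (Fin 2) ℤ) ≠ 0 ∧
      Matrix.trace (f * (!![6, 17; 17, 51] : Matrix (Fin 2) (Fin 2) ℤ).map ((↑) : ℤ → ℝ))
        = 2) := by
  intro f Lmem
  constructor
  · constructor
    · -- 3 is attained at !![1,0;0,0]
      refine ⟨!![1, 0; 0, 0], ⟨by norm_num [Lmem], by norm_num [Lmem], by norm_num [Lmem]⟩,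
        ?_, ?_, by simp [Matrix.det_fin_two], ?_⟩
      · refine Matrix.PosSemidef.of_dotProduct_mulVec_nonneg ?_ ?_
        · ext i j
          fin_cases i <;> fin_cases j <;>
            simp [Matrix.conjTranspose, Matrix.map_apply]
        · intro v
          have hv : dotProduct (star v)
              (Matrix.mulVec ((!![1, 0; 0, 0] : Matrix (Fin 2) (Fin 2) ℤ).map ((↑) : ℤ → ℝ)) v)
              = v 0 * v 0 := by
            simp [dotProduct, Matrix.mulVec, Fin.sum_univ_two, Matrix.map_apply]
          rw [hv]; nlinarith [sq_nonneg (v 0)]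
      · intro H
        have := congrFun (congrFun H 0) 0
        simp at this
      · rw [show f = !![3, -14/17; -14/17, 4/17] from rfl, trace_formula]
        norm_num
    · -- lower bound
      rintro t ⟨h, ⟨hsym, hb17, hc17⟩, hpsd, hne, hdet, rfl⟩
      obtain ⟨ha, hc⟩ := psd_entries h hpsd
      rw [Matrix.det_fin_two] at hdet
      have hdet' : h 0 0 * h 1 1 = (h 0 1) ^ 2 := by
        rw [hsym] at hdet ⊢; nlinarith [hdet]
      obtain ⟨g, x, y, hg, hax, hbxy, hcy⟩ := decomp ha hc hdet'
      have hg1 : 1 ≤ g := by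
        rcases hg.lt_or_eq with h'|h'
        · exact h'
        · exfalso; apply hne
          have e00 : h 0 0 = 0 := by rw [hax, ← h']; ring
          have e01 : h 0 1 = 0 := by rw [hbxy, ← h']; ring
          have e10 : h 1 0 = 0 := by rw [← hsym]; exact e01
          have e11 : h 1 1 = 0 := by rw [hcy, ← h']; ring
          ext i j
          fin_cases i <;> fin_cases j <;> simp only [Matrix.zero_apply]
          · exact e00
          · exact e01
          · exact e10
          · exact e11
      have hxy : x ≠ 0 ∨ y ≠ 0 := by
        by_contra hxy
        push_neg at hxy
        obtain ⟨rfl, rfl⟩ := hxy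
        apply hne
        have e00 : h 0 0 = 0 := by rw [hax]; ring
        have e01 : h 0 1 = 0 := by rw [hbxy]; ring
        have e10 : h 1 0 = 0 := by rw [← hsym]; exact e01
        have e11 : h 1 1 = 0 := by rw [hcy]; ring
        ext i j
        fin_cases i <;> fin_cases j <;> simp only [Matrix.zero_apply]
        · exact e00
        · exact e01
        · exact e10
        · exact e11
      have key : (51 : ℤ) ≤ g * (51*x^2 - 28*(x*y) + 4*y^2) := by
        have hp : Prime (17 : ℤ) := by norm_num
        by_cases h17 : (17 : ℤ) ∣ g
        · obtain ⟨k, rfl⟩ := h17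
          have hk : 1 ≤ k := by omega
          have hq := keyQ1 hxy
          nlinarith
        · have hy17 : (17 : ℤ) ∣ y := by
            have hdc : (17 : ℤ) ∣ g * y ^ 2 := hcy ▸ hc17
            have := (hp.dvd_mul.mp hdc).resolve_left h17
            exact hp.dvd_of_dvd_pow this
          obtain ⟨z, rfl⟩ := hy17
          have hxz : x ≠ 0 ∨ z ≠ 0 := by
            rcases hxy with h'|h'
            · exact Or.inl h'
            · right; intro hz; apply h'; rw [hz, mul_zero]
          have hq := keyQ2 hxz
          nlinarith
      rw [show f = !![3, -14/17; -14/17, 4/17] from rfl, trace_formula]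
      have ca : (h 0 0 : ℝ) = (g : ℝ) * (x : ℝ)^2 := by exact_mod_cast congrArg (Int.cast : ℤ → ℝ) hax
      have cb : (h 0 1 : ℝ) = (g : ℝ) * ((x : ℝ) * (y : ℝ)) := by
        exact_mod_cast congrArg (Int.cast : ℤ → ℝ) hbxy
      have cb' : (h 1 0 : ℝ) = (g : ℝ) * ((x : ℝ) * (y : ℝ)) := by rw [← hsym]; exact cb
      have cc : (h 1 1 : ℝ) = (g : ℝ) * (y : ℝ)^2 := by exact_mod_cast congrArg (Int.cast : ℤ → ℝ) hcy
      have kr : (51 : ℝ) ≤ (g : ℝ) * (51*(x:ℝ)^2 - 28*((x:ℝ)*(y:ℝ)) + 4*(y:ℝ)^2) := by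
        exact_mod_cast key
      rw [ca, cb, cb', cc]
      nlinarith [kr]
  · refine ⟨⟨by norm_num [Lmem], by norm_num [Lmem], by norm_num [Lmem]⟩, ?_, ?_, ?_⟩
    · refine Matrix.PosSemidef.of_dotProduct_mulVec_nonneg ?_ ?_
      · ext i j
        fin_cases i <;> fin_cases j <;>
          simp [Matrix.conjTranspose, Matrix.map_apply]
      · intro v
        have hv : dotProduct (star v)
            (Matrix.mulVec ((!![6, 17; 17, 51] : Matrix (Fin 2) (Fin 2) ℤ).map ((↑) : ℤ → ℝ)) v)
            = 6 * v 0 * v 0 + 17 * v 0 * v 1 + 17 * v 1 * v 0 + 51 * v 1 * v 1 := by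
          simp [dotProduct, Matrix.mulVec, Fin.sum_univ_two, Matrix.map_apply]
          ring
        rw [hv]
        nlinarith [sq_nonneg (6 * v 0 + 17 * v 1), sq_nonneg (v 1)]
    · intro H
      have := congrFun (congrFun H 0) 0
      simp at this
    · rw [show f = !![3, -14/17; -14/17, 4/17] from rfl, trace_formula]
      norm_num
end

section
/- Let t ≥ 3 be an integer, L = L(1,t) the lattice of symmetric 2×2 integer matrices ((a,b),(b,c)) with t | b and t | c, and f any real positive definite binary quadratic form. Then the minimum of (f,h) over all nonzero positive semi-definite h ∈ L is at least √(3/t) times the minimum of (f,h) over rank-1 elements h ∈ L. -/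
open Matrix Submodule

lemma key_ineq (α β γ a b c : ℝ) (hα : 0 ≤ α) (hγ : 0 ≤ γ) (hD : 0 ≤ α*γ - β^2)
    (ha : 0 ≤ a) (hc : 0 ≤ c) (hd : 0 ≤ a*c - b^2) :
    2 * Real.sqrt ((α*γ - β^2) * (a*c - b^2)) ≤ α*a + 2*β*b + γ*c := by
  set D := α*γ - β^2 with hDdef
  set d := a*c - b^2 with hddef
  have h1 : 2 * Real.sqrt (α*a*(γ*c)) ≤ α*a + γ*c := by
    have h := two_mul_le_add_sq (Real.sqrt (α*a)) (Real.sqrt (γ*c))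
    rw [Real.sq_sqrt (by positivity), Real.sq_sqrt (by positivity)] at h
    have hs : Real.sqrt (α*a*(γ*c)) = Real.sqrt (α*a) * Real.sqrt (γ*c) :=
      Real.sqrt_mul (by positivity) _
    rw [hs]; nlinarith [h]
  have h2 : 2 * ( |β| * |b| ) * Real.sqrt (D * d) ≤ β^2 * d + b^2 * D := by
    have h := two_mul_le_add_sq ( |β| * Real.sqrt d) ( |b| * Real.sqrt D)
    have e1 : ( |β| * Real.sqrt d)^2 = β^2 * d := by
      rw [mul_pow, sq_abs, Real.sq_sqrt hd]
    have e2 : ( |b| * Real.sqrt D)^2 = b^2 * D := by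
      rw [mul_pow, sq_abs, Real.sq_sqrt hD]
    rw [e1, e2] at h
    have hs : Real.sqrt (D * d) = Real.sqrt D * Real.sqrt d :=
      Real.sqrt_mul hD _
    rw [hs]; nlinarith [h]
  have h3 : |β| * |b| + Real.sqrt (D * d) ≤ Real.sqrt (α*a*(γ*c)) := by
    rw [show α*a*(γ*c) = (α*γ)*(a*c) by ring]
    rw [← Real.sqrt_sq (by positivity : (0:ℝ) ≤ |β| * |b| + Real.sqrt (D*d))]
    apply Real.sqrt_le_sqrt
    have hsq : Real.sqrt (D*d)^2 = D*d := Real.sq_sqrt (by positivity)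
    have expand : ( |β| * |b| + Real.sqrt (D*d))^2
        = β^2*b^2 + D*d + 2*( |β| * |b| )*Real.sqrt (D*d) := by
      rw [add_sq, hsq, mul_pow, sq_abs, sq_abs]; ring
    rw [expand]
    have hQ : β^2*b^2 + D*d + (β^2*d + b^2*D) = α*γ*(a*c) := by
      rw [hDdef, hddef]; ring
    linarith
  have h4 : -(2 * ( |β| * |b| )) ≤ 2*β*b := by
    have h := neg_abs_le (β*b)
    rw [abs_mul] at h
    linarith
  linarith

lemma quad_eval (M : Matrix (Fin 2) (Fin 2) ℝ) (x : Fin 2 → ℝ) :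
    dotProduct (star x) (M *ᵥ x)
      = M 0 0 * (x 0)^2 + (M 0 1 + M 1 0) * (x 0 * x 1) + M 1 1 * (x 1)^2 := by
  simp [dotProduct, Matrix.mulVec, Fin.sum_univ_two]
  ring

lemma psd2_facts (M : Matrix (Fin 2) (Fin 2) ℝ) (hM : M.PosSemidef) :
    0 ≤ M 0 0 ∧ 0 ≤ M 1 1 ∧ 0 ≤ M 0 0 * M 1 1 - M 0 1 * M 1 0 := by
  have hsym : M 1 0 = M 0 1 := by
    have := hM.1.apply 0 1
    simpa using this
  have hq : ∀ x y : ℝ, 0 ≤ M 0 0 * x^2 + 2 * M 0 1 * (x*y) + M 1 1 * y^2 := by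
    intro x y
    have := hM.dotProduct_mulVec_nonneg ![x, y]
    rw [quad_eval] at this
    simp [hsym] at this ⊢
    linarith [this]
  have ha : 0 ≤ M 0 0 := by simpa using hq 1 0
  have hc : 0 ≤ M 1 1 := by simpa using hq 0 1
  refine ⟨ha, hc, ?_⟩
  rw [hsym]
  set a := M 0 0; set b := M 0 1; set c := M 1 1
  by_contra hcon
  push_neg at hcon
  have h1 : 0 ≤ c * (a*c - b*b) := by linarith [hq c (-b)]
  have h2 : 0 ≤ a * (a*c - b*b) := by linarith [hq (-b) a]
  have ha0 : a = 0 := by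
    rcases eq_or_lt_of_le ha with h|h
    · exact h.symm
    · exfalso; nlinarith
  have hc0 : c = 0 := by
    rcases eq_or_lt_of_le hc with h|h
    · exact h.symm
    · exfalso; nlinarith
  have hb1 := hq 1 1
  have hb2 := hq 1 (-1)
  nlinarith

lemma finrank_span_int (w : Fin 2 → ℤ) (hw : w ≠ 0) :
    Module.finrank ℤ (Submodule.span ℤ {w}) = 1 := by
  have hinj : Function.Injective (LinearMap.toSpanSingleton ℤ (Fin 2 → ℤ) w) := by
    intro x y hxy
    simp only [LinearMap.toSpanSingleton_apply] at hxy
    have : (x - y) • w = 0 := by rw [sub_smul, hxy, sub_self]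
    rcases smul_eq_zero.mp this with h | h
    · exact sub_eq_zero.mp h
    · exact absurd h hw
  rw [LinearMap.span_singleton_eq_range ℤ (Fin 2 → ℤ) w,
    ← (LinearEquiv.ofInjective _ hinj).finrank_eq, Module.finrank_self]

lemma rank_one_aux (B : Matrix (Fin 2) (Fin 2) ℤ) (p q d : ℤ) (hd : d ≠ 0)
    (hcop : IsCoprime p q)
    (h0 : Bᵀ 0 = (d*p) • ![p, q]) (h1 : Bᵀ 1 = (d*q) • ![p, q]) :
    B.rank = 1 := by
  have hv : ![p, q] ≠ 0 := by
    intro hz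
    have hp : p = 0 := congrFun hz 0
    have hq : q = 0 := congrFun hz 1
    rw [hp, hq] at hcop
    exact not_isCoprime_zero_zero hcop
  have hrange : Set.range Bᵀ = {Bᵀ 0, Bᵀ 1} := by
    ext z
    constructor
    · rintro ⟨i, rfl⟩
      fin_cases i <;> simp
    · rintro (rfl | rfl) <;> exact ⟨_, rfl⟩
  have hspan : span ℤ (Set.range Bᵀ) = span ℤ {d • ![p, q]} := by
    rw [hrange]
    apply le_antisymm
    · rw [span_le]
      rintro z (rfl | rfl)
      · rw [h0, show (d*p) • ![p,q] = p • (d • ![p,q]) by rw [smul_smul, mul_comm]]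
        exact smul_mem _ _ (subset_span rfl)
      · rw [h1, show (d*q) • ![p,q] = q • (d • ![p,q]) by rw [smul_smul, mul_comm]]
        exact smul_mem _ _ (subset_span rfl)
    · rw [span_le]
      rintro z rfl
      obtain ⟨u, v, huv⟩ := hcop
      have : d • ![p, q] = u • ((d*p) • ![p,q]) + v • ((d*q) • ![p,q]) := by
        rw [smul_smul, smul_smul, ← add_smul]
        congr 1
        calc d = d * (u * p + v * q) := by rw [huv, mul_one]
          _ = u * (d * p) + v * (d * q) := by ring
      rw [this]
      refine add_mem (smul_mem _ _ (subset_span ?_)) (smul_mem _ _ (subset_span ?_))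
      · rw [← h0]; exact Or.inl rfl
      · rw [← h1]; exact Or.inr rfl
  rw [Matrix.rank, Matrix.range_mulVecLin, show B.col = Bᵀ from rfl, hspan]
  exact finrank_span_int _ (smul_ne_zero hd hv)

lemma sq_decomp (a b c : ℤ) (ha : 0 ≤ a) (hc : 0 ≤ c) (hacb : a*c = b^2)
    (hne : ¬(a = 0 ∧ b = 0 ∧ c = 0)) :
    ∃ d p q : ℤ, 0 < d ∧ IsCoprime p q ∧ a = d*p^2 ∧ b = d*(p*q) ∧ c = d*q^2 := by
  rcases eq_or_lt_of_le ha with haz | hapos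
  · -- a = 0
    have hb : b = 0 := by
      have : b^2 = 0 := by rw [← hacb, ← haz, zero_mul]
      exact pow_eq_zero_iff (by norm_num) |>.mp this
    have hcpos : 0 < c := by
      rcases eq_or_lt_of_le hc with hcz | h
      · exact absurd ⟨haz.symm, hb, hcz.symm⟩ hne
      · exact h
    exact ⟨c, 0, 1, hcpos, isCoprime_zero_left.mpr isUnit_one, by simp [← haz], by simp [hb], by simp⟩
  · -- a > 0
    set g : ℤ := (Int.gcd a b : ℤ) with hgdef
    have hgnat : 0 < Int.gcd a b := by
      refine Nat.pos_of_ne_zero fun h => ?_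
      rw [Int.gcd_eq_zero_iff] at h
      exact absurd h.1 hapos.ne'
    have hgpos : 0 < g := by rw [hgdef]; exact_mod_cast hgnat
    obtain ⟨p, hp⟩ : g ∣ a := Int.gcd_dvd_left _ _
    obtain ⟨q, hq⟩ : g ∣ b := Int.gcd_dvd_right _ _
    have hcop : IsCoprime p q := by
      rw [Int.isCoprime_iff_gcd_eq_one]
      have hp' : p = a / g := by rw [hp, Int.mul_ediv_cancel_left _ hgpos.ne']
      have hq' : q = b / g := by rw [hq, Int.mul_ediv_cancel_left _ hgpos.ne']
      rw [hp', hq', hgdef]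
      exact Int.gcd_div_gcd_div_gcd hgnat
    have hppos : 0 < p := by
      by_contra hple
      push_neg at hple
      nlinarith
    have hpc : p * c = g * q^2 := by
      have h2 : g * (p * c) = g * (g * q^2) := by
        calc g * (p * c) = a * c := by rw [hp]; ring
          _ = b^2 := hacb
          _ = g * (g * q^2) := by rw [hq]; ring
      exact mul_left_cancel₀ hgpos.ne' h2
    have hpdvd : p ∣ g := by
      have h3 : p ∣ g * q^2 := ⟨c, by linarith [hpc]⟩
      exact (hcop.pow_right (n := 2)).dvd_of_dvd_mul_right h3
    obtain ⟨d, hd⟩ := hpdvd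
    have hdpos : 0 < d := by nlinarith
    refine ⟨d, p, q, hdpos, hcop, ?_, ?_, ?_⟩
    · rw [hp, hd]; ring
    · rw [hq, hd]; ring
    · have : p * c = p * (d * q^2) := by rw [hpc, hd]; ring
      exact mul_left_cancel₀ hppos.ne' this
set_option maxHeartbeats 1000000 in

lemma hermite_min (α β γ : ℝ) (hα : 0 < α) (hγ : 0 < γ) (hD : 0 < α*γ - β^2)
    (hpos : ∀ x y : ℝ, ¬(x = 0 ∧ y = 0) → 0 < α*x^2 + 2*β*(x*y) + γ*y^2) :
    ∃ p q : ℤ, IsCoprime p q ∧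
      (∀ v : ℤ × ℤ, v ≠ 0 →
        α*(p:ℝ)^2 + 2*β*((p:ℝ)*(q:ℝ)) + γ*(q:ℝ)^2
          ≤ α*(v.1:ℝ)^2 + 2*β*((v.1:ℝ)*(v.2:ℝ)) + γ*(v.2:ℝ)^2) ∧
      (α*(p:ℝ)^2 + 2*β*((p:ℝ)*(q:ℝ)) + γ*(q:ℝ)^2)^2 ≤ 4/3*(α*γ - β^2) := by
  set Q : ℤ × ℤ → ℝ :=
    fun v => α*(v.1:ℝ)^2 + 2*β*((v.1:ℝ)*(v.2:ℝ)) + γ*(v.2:ℝ)^2 with hQ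
  have hQpos : ∀ v : ℤ × ℤ, v ≠ 0 → 0 < Q v := by
    intro v hv
    apply hpos
    rintro ⟨h1, h2⟩
    exact hv (Prod.ext (by exact_mod_cast h1) (by exact_mod_cast h2))
  set N : ℤ := ⌈Real.sqrt (α*γ/(α*γ-β^2)) + Real.sqrt (α*α/(α*γ-β^2))⌉ + 1 with hN
  have hsx := Real.sqrt_nonneg (α*γ/(α*γ-β^2))
  have hsy := Real.sqrt_nonneg (α*α/(α*γ-β^2))
  have hN1 : 1 ≤ N := by
    have : (0:ℤ) ≤ ⌈Real.sqrt (α*γ/(α*γ-β^2)) + Real.sqrt (α*α/(α*γ-β^2))⌉ :=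
      Int.ceil_nonneg (by linarith)
    omega
  have hNx : Real.sqrt (α*γ/(α*γ-β^2)) ≤ (N:ℝ) := by
    have h := Int.le_ceil (Real.sqrt (α*γ/(α*γ-β^2)) + Real.sqrt (α*α/(α*γ-β^2)))
    push_cast [hN]
    linarith
  have hNy : Real.sqrt (α*α/(α*γ-β^2)) ≤ (N:ℝ) := by
    have h := Int.le_ceil (Real.sqrt (α*γ/(α*γ-β^2)) + Real.sqrt (α*α/(α*γ-β^2)))
    push_cast [hN]
    linarith
  have hNR : (0:ℝ) ≤ (N:ℝ) := by exact_mod_cast le_trans (by norm_num) hN1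
  have hout1 : ∀ x y : ℤ, (N:ℝ) < |(x:ℝ)| → α < Q (x, y) := by
    intro x y hx
    have h0 : α*γ/(α*γ-β^2) ≤ (N:ℝ)^2 := by
      rw [← Real.sq_sqrt (le_of_lt (div_pos (mul_pos hα hγ) hD))]
      exact pow_le_pow_left₀ (Real.sqrt_nonneg _) hNx 2
    have h1 : (N:ℝ)^2 < ((x:ℝ))^2 := by
      rw [← sq_abs (x:ℝ)]
      exact pow_lt_pow_left₀ hx hNR two_ne_zero
    have hxx' : α*γ < (α*γ-β^2) * (x:ℝ)^2 := by
      rw [div_le_iff₀ hD] at h0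
      nlinarith
    simp only [hQ]
    nlinarith [sq_nonneg (β*(x:ℝ) + γ*(y:ℝ)), hγ]
  have hout2 : ∀ x y : ℤ, (N:ℝ) < |(y:ℝ)| → α < Q (x, y) := by
    intro x y hy
    have h0 : α*α/(α*γ-β^2) ≤ (N:ℝ)^2 := by
      rw [← Real.sq_sqrt (le_of_lt (div_pos (mul_pos hα hα) hD))]
      exact pow_le_pow_left₀ (Real.sqrt_nonneg _) hNy 2
    have h1 : (N:ℝ)^2 < ((y:ℝ))^2 := by
      rw [← sq_abs (y:ℝ)]
      exact pow_lt_pow_left₀ hy hNR two_ne_zero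
    have hyy' : α*α < (α*γ-β^2) * (y:ℝ)^2 := by
      rw [div_le_iff₀ hD] at h0
      nlinarith
    simp only [hQ]
    nlinarith [sq_nonneg (α*(x:ℝ) + β*(y:ℝ)), hα]
  set F : Finset (ℤ × ℤ) := ((Finset.Icc (-N) N) ×ˢ (Finset.Icc (-N) N)).erase (0,0) with hF
  have hmem10 : ((1,0) : ℤ × ℤ) ∈ F := by
    simp only [hF, Finset.mem_erase, Finset.mem_product, Finset.mem_Icc]
    refine ⟨by simp, ⟨by omega, by omega⟩, by omega, by omega⟩
  obtain ⟨v₀, hmemF, hminF⟩ := F.exists_min_image Q ⟨(1,0), hmem10⟩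
  obtain ⟨p, q⟩ := v₀
  have hpq0 : ((p,q) : ℤ × ℤ) ≠ 0 := by
    have := Finset.ne_of_mem_erase hmemF
    simpa [Prod.ext_iff] using this
  have hQ10 : Q (1,0) = α := by simp [hQ]
  have hmin10 : Q (p,q) ≤ α := by
    have := hminF _ hmem10
    rwa [hQ10] at this
  have hglobal : ∀ v : ℤ × ℤ, v ≠ 0 → Q (p,q) ≤ Q v := by
    rintro ⟨x, y⟩ hv
    by_cases hmem : (x,y) ∈ F
    · exact hminF _ hmem
    · have hne : ¬(x = 0 ∧ y = 0) := by
        rintro ⟨rfl, rfl⟩; exact hv rfl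
      have hor : N < |x| ∨ N < |y| := by
        by_contra hcon
        push_neg at hcon
        obtain ⟨hx, hy⟩ := hcon
        rcases abs_le.mp hx with ⟨hx1, hx2⟩
        rcases abs_le.mp hy with ⟨hy1, hy2⟩
        apply hmem
        simp only [hF, Finset.mem_erase, Finset.mem_product, Finset.mem_Icc]
        refine ⟨?_, ⟨hx1, hx2⟩, hy1, hy2⟩
        intro h
        rw [Prod.mk.injEq] at h
        exact hne ⟨h.1, h.2⟩
      have hlt : α < Q (x, y) := by
        rcases hor with h | h
        · refine hout1 x y ?_
          rw [← Int.cast_abs]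
          exact_mod_cast h
        · refine hout2 x y ?_
          rw [← Int.cast_abs]
          exact_mod_cast h
      linarith
  -- gcd p q = 1
  have hQpqpos : 0 < Q (p, q) := hQpos _ hpq0
  set n : ℕ := Int.gcd p q with hn
  obtain ⟨p', hp'⟩ : ((n:ℤ)) ∣ p := Int.gcd_dvd_left _ _
  obtain ⟨q', hq'⟩ : ((n:ℤ)) ∣ q := Int.gcd_dvd_right _ _
  have hn0 : n ≠ 0 := by
    intro h
    rw [hn, Int.gcd_eq_zero_iff] at h
    exact hpq0 (Prod.ext h.1 h.2)
  have hn1 : n = 1 := by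
    by_contra hne1
    have hn2 : 2 ≤ n := by omega
    have hp'q' : ((p', q') : ℤ × ℤ) ≠ 0 := by
      rintro hz
      have h1 : p' = 0 := congrArg Prod.fst hz
      have h2 : q' = 0 := congrArg Prod.snd hz
      apply hpq0
      rw [hp', hq', h1, h2]
      simp
    have heq : Q (p, q) = (n:ℝ)^2 * Q (p', q') := by
      simp only [hQ, hp', hq']
      push_cast
      ring
    have hge := hglobal _ hp'q'
    have hnR : (2:ℝ) ≤ (n:ℝ) := by exact_mod_cast hn2
    have h4 : (4:ℝ) ≤ (n:ℝ)^2 := by nlinarith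
    linarith [mul_le_mul_of_nonneg_right h4 (hQpos _ hp'q').le, heq, hge, hQpos _ hp'q']
  have hcop : IsCoprime p q := Int.isCoprime_iff_gcd_eq_one.mpr hn1
  refine ⟨p, q, hcop, hglobal, ?_⟩
  -- the Hermite bound
  obtain ⟨u, w, huw⟩ := hcop
  have hdet : p*u - q*(-w) = 1 := by linear_combination huw
  set r : ℤ := -w with hr
  set s : ℤ := u with hs
  have hdet' : p*s - q*r = 1 := hdet
  set b0 : ℝ := α*((p:ℝ)*(r:ℝ)) + β*((p:ℝ)*(s:ℝ) + (q:ℝ)*(r:ℝ)) + γ*((q:ℝ)*(s:ℝ)) with hb0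
  set k : ℤ := round (-b0 / Q (p,q)) with hk
  have hkb : |b0 + (k:ℝ) * Q (p,q)| ≤ Q (p,q) / 2 := by
    have h := abs_sub_round (-b0 / Q (p,q))
    have hmne : Q (p,q) ≠ 0 := hQpqpos.ne'
    have heq : b0 + (k:ℝ) * Q (p,q) = -(Q (p,q) * ((-b0 / Q (p,q)) - (k:ℝ))) := by
      field_simp
      ring
    rw [heq, abs_neg, abs_mul, abs_of_pos hQpqpos]
    calc Q (p,q) * |(-b0 / Q (p,q)) - (k:ℝ)| ≤ Q (p,q) * (1/2) :=
          mul_le_mul_of_nonneg_left h hQpqpos.le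
      _ = Q (p,q) / 2 := by ring
  have hwnz : ((r + k*p, s + k*q) : ℤ × ℤ) ≠ 0 := by
    intro hz
    have h1 : r + k*p = 0 := congrArg Prod.fst hz
    have h2 : s + k*q = 0 := congrArg Prod.snd hz
    have : (1:ℤ) = p*(s + k*q) - q*(r + k*p) := by linear_combination -hdet'
    rw [h1, h2] at this
    simp at this
  have hγ2 : Q (p,q) ≤ Q (r + k*p, s + k*q) := hglobal _ hwnz
  have hid : Q (p,q) * Q (r + k*p, s + k*q)
      = (b0 + (k:ℝ) * Q (p,q))^2 + (α*γ - β^2) := by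
    have hps : ((p:ℝ)*(s:ℝ) - (q:ℝ)*(r:ℝ)) = 1 := by exact_mod_cast hdet'
    simp only [hQ, hb0]
    push_cast
    linear_combination ((α*γ - β^2) * ((p:ℝ)*(s:ℝ) - (q:ℝ)*(r:ℝ) + 1)) * hps
  have hsq : (b0 + (k:ℝ) * Q (p,q))^2 ≤ (Q (p,q)/2)^2 := by
    rcases abs_le.mp hkb with ⟨hl, hr'⟩
    exact sq_le_sq' hl hr'
  have hmm : Q (p,q) * Q (p,q) ≤ Q (p,q) * Q (r + k*p, s + k*q) :=
    mul_le_mul_of_nonneg_left hγ2 hQpqpos.le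
  have hgoal : Q (p,q) = α*(p:ℝ)^2 + 2*β*((p:ℝ)*(q:ℝ)) + γ*(q:ℝ)^2 := rfl
  rw [← hgoal]
  clear_value k b0
  set m := Q (p, q) with hm
  set Q2 := Q (r + k * p, s + k * q) with hQ2
  set X := b0 + (k:ℝ) * m with hX
  clear_value m Q2 X
  nlinarith [hmm, hid, hsq]

set_option maxHeartbeats 1000000 in
/-- **(1,t)-polarisation.** For `t ≥ 3`, `L = L(1,t)` the lattice of
symmetric integer 2×2 matrices `((a,b),(b,c))` with `t ∣ b` and `t ∣ c`, and any real
positive definite binary form `f`, the minimum of `(f,h)` over nonzero positive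
semi-definite `h ∈ L` is at least `√(3/t)` times the minimum over rank-1 `h ∈ L`. -/
theorem barnes_cohn_one_t (t : ℕ) (ht : 3 ≤ t)
    (A : Matrix (Fin 2) (Fin 2) ℝ) (hA : A.PosDef) :
    ∀ h : Matrix (Fin 2) (Fin 2) ℤ,
      h.IsSymm → (t : ℤ) ∣ h 0 1 → (t : ℤ) ∣ h 1 1 →
      (h.map ((↑) : ℤ → ℝ)).PosSemidef → h ≠ 0 →
      Real.sqrt (3 / (t : ℝ)) *
          sInf {r : ℝ | ∃ B : Matrix (Fin 2) (Fin 2) ℤ,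
            B.IsSymm ∧ (t : ℤ) ∣ B 0 1 ∧ (t : ℤ) ∣ B 1 1 ∧
            (B.map ((↑) : ℤ → ℝ)).PosSemidef ∧ B.rank = 1 ∧
            r = Matrix.trace (A * B.map ((↑) : ℤ → ℝ))}
        ≤ Matrix.trace (A * h.map ((↑) : ℤ → ℝ)) := by
  intro h hsym hdvd1 hdvd2 hpsd hne0
  set α : ℝ := A 0 0 with hαdef
  set β : ℝ := A 0 1 with hβdef
  set γ : ℝ := A 1 1 with hγdef
  have hsymA : A 1 0 = β := by
    have := hA.1.apply 0 1
    simpa using this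
  -- the quadratic form of A is positive on nonzero vectors
  have hquad : ∀ x y : ℝ, ¬(x = 0 ∧ y = 0) → 0 < α*x^2 + 2*β*(x*y) + γ*y^2 := by
    intro x y hxy
    have hvne : ![x, y] ≠ 0 := by
      intro hz
      have h1 : x = 0 := by simpa using congrFun hz 0
      have h2 : y = 0 := by simpa using congrFun hz 1
      exact hxy ⟨h1, h2⟩
    have := hA.dotProduct_mulVec_pos hvne
    rw [quad_eval] at this
    simp only [Matrix.cons_val_zero, Matrix.cons_val_one, Matrix.head_cons, hsymA] at this
    nlinarith [this]
  have hα : 0 < α := by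
    have := hquad 1 0 (by norm_num)
    nlinarith [this]
  have hγ : 0 < γ := by
    have := hquad 0 1 (by norm_num)
    nlinarith [this]
  have hD : 0 < α*γ - β^2 := by
    have := hA.det_pos
    rw [Matrix.det_fin_two, hsymA] at this
    nlinarith [this]
  -- trace formula
  have htr : ∀ B : Matrix (Fin 2) (Fin 2) ℤ,
      Matrix.trace (A * B.map ((↑) : ℤ → ℝ))
        = α*((B 0 0 : ℤ):ℝ) + β*(((B 1 0 : ℤ):ℝ) + ((B 0 1 : ℤ):ℝ)) + γ*((B 1 1 : ℤ):ℝ) := by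
    intro B
    rw [Matrix.trace_fin_two]
    simp only [Matrix.mul_apply, Fin.sum_univ_two, Matrix.map_apply, hsymA]
    ring
  set S : Set ℝ := {r : ℝ | ∃ B : Matrix (Fin 2) (Fin 2) ℤ,
      B.IsSymm ∧ (t : ℤ) ∣ B 0 1 ∧ (t : ℤ) ∣ B 1 1 ∧
      (B.map ((↑) : ℤ → ℝ)).PosSemidef ∧ B.rank = 1 ∧
      r = Matrix.trace (A * B.map ((↑) : ℤ → ℝ))} with hSdef
  -- lower bound for S
  have hlb : ∀ r ∈ S, (0:ℝ) ≤ r := by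
    rintro r ⟨B, hBsym, -, -, hBpsd, -, rfl⟩
    obtain ⟨h00, h11, hdet⟩ := psd2_facts _ hBpsd
    have e : ∀ i j, (B.map ((↑) : ℤ → ℝ)) i j = ((B i j : ℤ):ℝ) := fun i j => rfl
    simp only [e] at h00 h11 hdet
    have hB10 : B 1 0 = B 0 1 := hBsym.apply 0 1
    have hkey := key_ineq α β γ ((B 0 0 : ℤ):ℝ) ((B 0 1 : ℤ):ℝ) ((B 1 1 : ℤ):ℝ)
      hα.le hγ.le hD.le h00 h11 (by rw [hB10] at hdet; nlinarith [hdet])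
    rw [htr B, hB10]
    have := Real.sqrt_nonneg ((α*γ - β^2) * (((B 0 0 : ℤ):ℝ)*((B 1 1 : ℤ):ℝ) - ((B 0 1 : ℤ):ℝ)^2))
    nlinarith [hkey, this]
  have hBdd : BddBelow S := ⟨0, fun r hr => hlb r hr⟩
  -- facts about h
  have eh : ∀ i j, (h.map ((↑) : ℤ → ℝ)) i j = ((h i j : ℤ):ℝ) := fun i j => rfl
  obtain ⟨ph00, ph11, phdet⟩ := psd2_facts _ hpsd
  simp only [eh] at ph00 ph11 phdet
  have hh10 : h 1 0 = h 0 1 := hsym.apply 0 1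
  have ha0 : (0:ℤ) ≤ h 0 0 := by exact_mod_cast ph00
  have hc0 : (0:ℤ) ≤ h 1 1 := by exact_mod_cast ph11
  have hdet0 : (0:ℤ) ≤ h 0 0 * h 1 1 - h 0 1 * h 0 1 := by
    rw [hh10] at phdet
    have : ((h 0 0 * h 1 1 - h 0 1 * h 0 1 : ℤ):ℝ) = ((h 0 0 : ℤ):ℝ)*((h 1 1 : ℤ):ℝ) - ((h 0 1 : ℤ):ℝ)*((h 0 1 : ℤ):ℝ) := by push_cast; ring
    have h2 : (0:ℝ) ≤ ((h 0 0 * h 1 1 - h 0 1 * h 0 1 : ℤ):ℝ) := by rw [this]; linarith [phdet]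
    exact_mod_cast h2
  rcases eq_or_lt_of_le hdet0 with hdeq | hdpos
  · -- det h = 0 : h itself has rank one
    have hprod : h 0 0 * h 1 1 = h 0 1^2 := by nlinarith [hdeq]
    have hnall : ¬(h 0 0 = 0 ∧ h 0 1 = 0 ∧ h 1 1 = 0) := by
      rintro ⟨z1, z2, z3⟩
      apply hne0
      ext i j
      fin_cases i <;> fin_cases j <;>
        simp only [Fin.zero_eta, Fin.mk_one, Matrix.zero_apply]
      · exact z1
      · exact z2
      · rw [hh10]; exact z2
      · exact z3
    obtain ⟨d, p, q, hd, hcop, e1, e2, e3⟩ := sq_decomp (h 0 0) (h 0 1) (h 1 1) ha0 hc0 hprod hnall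
    have hrank : h.rank = 1 := by
      apply rank_one_aux h p q d hd.ne' hcop
      · funext i
        fin_cases i <;> simp only [Fin.zero_eta, Fin.mk_one, Matrix.transpose_apply, Pi.smul_apply,
          Matrix.cons_val_zero, Matrix.cons_val_one, Matrix.head_cons, smul_eq_mul]
        · rw [e1]; ring
        · rw [hh10, e2]; ring
      · funext i
        fin_cases i <;> simp only [Fin.zero_eta, Fin.mk_one, Matrix.transpose_apply, Pi.smul_apply,
          Matrix.cons_val_zero, Matrix.cons_val_one, Matrix.head_cons, smul_eq_mul]
        · rw [e2]; ring
        · rw [e3]; ring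
    have hmemS : Matrix.trace (A * h.map ((↑) : ℤ → ℝ)) ∈ S :=
      ⟨h, hsym, hdvd1, hdvd2, hpsd, hrank, rfl⟩
    have hInf0 : (0:ℝ) ≤ sInf S := le_csInf ⟨_, hmemS⟩ hlb
    have hInfle : sInf S ≤ Matrix.trace (A * h.map ((↑) : ℤ → ℝ)) := csInf_le hBdd hmemS
    have hsq1 : Real.sqrt (3/(t:ℝ)) ≤ 1 := by
      rw [show (1:ℝ) = Real.sqrt 1 by rw [Real.sqrt_one]]
      apply Real.sqrt_le_sqrt
      have htR : (3:ℝ) ≤ (t:ℝ) := by exact_mod_cast ht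
      rw [div_le_one (by linarith)]
      linarith
    calc Real.sqrt (3/(t:ℝ)) * sInf S ≤ 1 * sInf S :=
          mul_le_mul_of_nonneg_right hsq1 hInf0
      _ = sInf S := one_mul _
      _ ≤ _ := hInfle
  · -- det h > 0
    have htR : (3:ℝ) ≤ (t:ℝ) := by exact_mod_cast ht
    have htpos : (0:ℝ) < (t:ℝ) := by linarith
    have htZ : ((t:ℤ)) ≠ 0 := by
      have : (3:ℤ) ≤ (t:ℤ) := by exact_mod_cast ht
      omega
    have hdetdvd : (t:ℤ) ∣ (h 0 0 * h 1 1 - h 0 1 * h 0 1) :=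
      dvd_sub (hdvd2.mul_left _) (hdvd1.mul_left _)
    have hdett : (t:ℤ) ≤ h 0 0 * h 1 1 - h 0 1 * h 0 1 := Int.le_of_dvd hdpos hdetdvd
    obtain ⟨p, q, hcop, hmin, hbound⟩ := hermite_min α β γ hα hγ hD hquad
    set m : ℝ := α*(p:ℝ)^2 + 2*β*((p:ℝ)*(q:ℝ)) + γ*(q:ℝ)^2 with hmdef
    have hpq0 : ¬((p:ℝ) = 0 ∧ (q:ℝ) = 0) := by
      rintro ⟨h1, h2⟩
      have hp : p = 0 := by exact_mod_cast h1
      have hq : q = 0 := by exact_mod_cast h2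
      rw [hp, hq] at hcop
      exact not_isCoprime_zero_zero hcop
    have hm : 0 < m := hquad _ _ hpq0
    -- the rank one competitor
    set B : Matrix (Fin 2) (Fin 2) ℤ :=
      !![(t:ℤ)*(p*p), (t:ℤ)*(p*q); (t:ℤ)*(p*q), (t:ℤ)*(q*q)] with hBdef
    have hB00 : B 0 0 = (t:ℤ)*(p*p) := rfl
    have hB01 : B 0 1 = (t:ℤ)*(p*q) := rfl
    have hB10 : B 1 0 = (t:ℤ)*(p*q) := rfl
    have hB11 : B 1 1 = (t:ℤ)*(q*q) := rfl
    have hBsym : B.IsSymm := by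
      apply Matrix.IsSymm.ext
      intro i j
      fin_cases i <;> fin_cases j <;> rfl
    have hBpsd : (B.map ((↑) : ℤ → ℝ)).PosSemidef := by
      apply Matrix.PosSemidef.of_dotProduct_mulVec_nonneg
      · apply Matrix.IsHermitian.ext
        intro i j
        rw [star_trivial]
        exact (hBsym.map _).apply i j
      · intro x
        have := quad_eval (B.map ((↑) : ℤ → ℝ)) x
        rw [this]
        have eB : ∀ i j, (B.map ((↑) : ℤ → ℝ)) i j = ((B i j : ℤ):ℝ) := fun i j => rfl
        rw [eB, eB, eB, eB, hB00, hB01, hB10, hB11]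
        have hexp : (((t:ℤ)*(p*p) : ℤ):ℝ) * (x 0)^2 + ((((t:ℤ)*(p*q) : ℤ):ℝ) + (((t:ℤ)*(p*q) : ℤ):ℝ)) * (x 0 * x 1) + (((t:ℤ)*(q*q) : ℤ):ℝ) * (x 1)^2 = (t:ℝ) * ((p:ℝ)*(x 0) + (q:ℝ)*(x 1))^2 := by
          push_cast
          ring
        rw [hexp]
        positivity
    have hBrank : B.rank = 1 := by
      apply rank_one_aux B p q ((t:ℤ)) htZ hcop
      · funext i
        fin_cases i <;> simp only [Fin.zero_eta, Fin.mk_one, Matrix.transpose_apply, Pi.smul_apply,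
          Matrix.cons_val_zero, Matrix.cons_val_one, Matrix.head_cons, smul_eq_mul]
        · rw [hB00]; ring
        · rw [hB10]; ring
      · funext i
        fin_cases i <;> simp only [Fin.zero_eta, Fin.mk_one, Matrix.transpose_apply, Pi.smul_apply,
          Matrix.cons_val_zero, Matrix.cons_val_one, Matrix.head_cons, smul_eq_mul]
        · rw [hB01]; ring
        · rw [hB11]; ring
    have hmemB : (t:ℝ) * m ∈ S := by
      refine ⟨B, hBsym, ⟨p*q, hB01⟩, ⟨q*q, hB11⟩, hBpsd, hBrank, ?_⟩
      rw [htr B, hB00, hB01, hB10, hB11, hmdef]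
      push_cast
      ring
    have hInfle : sInf S ≤ (t:ℝ) * m := csInf_le hBdd hmemB
    -- trace lower bound
    have hcast : ((h 0 0 : ℤ):ℝ)*((h 1 1 : ℤ):ℝ) - ((h 0 1 : ℤ):ℝ)^2
        = ((h 0 0 * h 1 1 - h 0 1 * h 0 1 : ℤ):ℝ) := by push_cast; ring
    have hdnn : (0:ℝ) ≤ ((h 0 0 : ℤ):ℝ)*((h 1 1 : ℤ):ℝ) - ((h 0 1 : ℤ):ℝ)^2 := by
      rw [hcast]
      exact_mod_cast hdet0
    have hkey := key_ineq α β γ ((h 0 0 : ℤ):ℝ) ((h 0 1 : ℤ):ℝ) ((h 1 1 : ℤ):ℝ)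
      hα.le hγ.le hD.le (by exact_mod_cast ha0) (by exact_mod_cast hc0) hdnn
    have htrh : 2 * Real.sqrt ((α*γ - β^2) * (((h 0 0 : ℤ):ℝ)*((h 1 1 : ℤ):ℝ) - ((h 0 1 : ℤ):ℝ)^2))
        ≤ Matrix.trace (A * h.map ((↑) : ℤ → ℝ)) := by
      rw [htr h, hh10]
      nlinarith [hkey]
    -- middle inequality
    have hdR : (t:ℝ) ≤ ((h 0 0 : ℤ):ℝ)*((h 1 1 : ℤ):ℝ) - ((h 0 1 : ℤ):ℝ)^2 := by
      rw [hcast]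
      exact_mod_cast hdett
    have hmid : Real.sqrt (3/(t:ℝ)) * ((t:ℝ) * m)
        ≤ 2 * Real.sqrt ((α*γ - β^2) * (((h 0 0 : ℤ):ℝ)*((h 1 1 : ℤ):ℝ) - ((h 0 1 : ℤ):ℝ)^2)) := by
      have hL : (0:ℝ) ≤ Real.sqrt (3/(t:ℝ)) * ((t:ℝ) * m) := by positivity
      have hR : (0:ℝ) ≤ 2 * Real.sqrt ((α*γ - β^2) * (((h 0 0 : ℤ):ℝ)*((h 1 1 : ℤ):ℝ) - ((h 0 1 : ℤ):ℝ)^2)) := by positivity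
      rw [← Real.sqrt_sq hL, ← Real.sqrt_sq hR]
      apply Real.sqrt_le_sqrt
      have eL : (Real.sqrt (3/(t:ℝ)) * ((t:ℝ) * m))^2 = 3*(t:ℝ)*m^2 := by
        rw [mul_pow, Real.sq_sqrt (by positivity : (0:ℝ) ≤ 3/(t:ℝ))]
        field_simp
      have eR : (2 * Real.sqrt ((α*γ - β^2) * (((h 0 0 : ℤ):ℝ)*((h 1 1 : ℤ):ℝ) - ((h 0 1 : ℤ):ℝ)^2)))^2
          = 4 * ((α*γ - β^2) * (((h 0 0 : ℤ):ℝ)*((h 1 1 : ℤ):ℝ) - ((h 0 1 : ℤ):ℝ)^2)) := by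
        rw [mul_pow, Real.sq_sqrt (mul_nonneg hD.le hdnn)]
        ring
      rw [eL, eR]
      clear_value m
      have hb3 : 3*(t:ℝ)*(m^2) ≤ 3*(t:ℝ)*(4/3*(α*γ - β^2)) :=
        mul_le_mul_of_nonneg_left hbound (by positivity)
      have hb4 : (α*γ - β^2)*(t:ℝ) ≤ (α*γ - β^2)*(((h 0 0 : ℤ):ℝ)*((h 1 1 : ℤ):ℝ) - ((h 0 1 : ℤ):ℝ)^2) :=
        mul_le_mul_of_nonneg_left hdR hD.le
      nlinarith [hb3, hb4]
    calc Real.sqrt (3/(t:ℝ)) * sInf S ≤ Real.sqrt (3/(t:ℝ)) * ((t:ℝ) * m) :=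
          mul_le_mul_of_nonneg_left hInfle (Real.sqrt_nonneg _)
      _ ≤ 2 * Real.sqrt ((α*γ - β^2) * (((h 0 0 : ℤ):ℝ)*((h 1 1 : ℤ):ℝ) - ((h 0 1 : ℤ):ℝ)^2)) := hmid
      _ ≤ _ := htrh
end

section
/- For any vector v = (v_1,...,v_n) ∈ ℤⁿ with n ≥ 2 and any prescribed integers in the strictly-upper-triangular positions above the subdiagonal (columns 2 to n-1), there exists an integer n×n matrix T whose last column is v, whose (i,j) entries for 2 ≤ j ≤ n-1 and i < j are the prescribed values, and whose first column can be chosen so that det(T) = gcd(v_1,...,v_n). -/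
lemma finset_gcd_eq_comb {ι : Type*} [DecidableEq ι] (s : Finset ι) (f : ι → ℤ) :
    ∃ c : ι → ℤ, (s.gcd f : ℤ) = ∑ i ∈ s, c i * f i := by
  induction s using Finset.induction_on with
  | empty => exact ⟨0, by simp⟩
  | @insert a s ha ih =>
    obtain ⟨c, hc⟩ := ih
    refine ⟨fun i => if i = a then Int.gcdA (f a) (s.gcd f) else Int.gcdB (f a) (s.gcd f) * c i, ?_⟩
    rw [Finset.gcd_insert, Finset.sum_insert ha, ← Int.coe_gcd, Int.gcd_eq_gcd_ab]
    simp only [eq_self_iff_true, if_true]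
    have : ∑ i ∈ s, (if i = a then Int.gcdA (f a) (s.gcd f) else Int.gcdB (f a) (s.gcd f) * c i) * f i
        = Int.gcdB (f a) (s.gcd f) * ∑ i ∈ s, c i * f i := by
      rw [Finset.mul_sum]
      refine Finset.sum_congr rfl fun i hi => ?_
      rw [if_neg (by rintro rfl; exact ha hi)]
      ring
    rw [this, ← hc]
    ring

lemma exists_coprime_shift (a b c : ℤ) (ha : a ≠ 0)
    (h : Int.gcd a (Int.gcd b c) = 1) : ∃ m : ℤ, Int.gcd a (b + m * c) = 1 := by
  classical
  set S : Finset ℕ := a.natAbs.primeFactors.filter (fun p => ¬ ((p : ℤ) ∣ b)) with hS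
  set mN : ℕ := ∏ p ∈ S, p with hmN
  refine ⟨(mN : ℤ), ?_⟩
  set m : ℤ := (mN : ℤ) with hm
  by_contra hk
  have hk0 : Int.gcd a (b + m * c) ≠ 0 := by
    intro h0
    exact ha (Int.gcd_eq_zero_iff.mp h0).1
  obtain ⟨p, hp, hpk⟩ := Nat.exists_prime_and_dvd hk
  have hpa : (p : ℤ) ∣ a :=
    dvd_trans (Int.natCast_dvd_natCast.mpr hpk) (Int.gcd_dvd_left _ _)
  have hpbc : (p : ℤ) ∣ b + m * c :=
    dvd_trans (Int.natCast_dvd_natCast.mpr hpk) (Int.gcd_dvd_right _ _)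
  have hpprime : Prime (p : ℤ) := Nat.prime_iff_prime_int.mp hp
  have hpm : ((p : ℤ) ∣ m) → False := by
    intro hdvd
    rw [hm, Int.natCast_dvd_natCast] at hdvd
    obtain ⟨q, hq, hpq⟩ := hp.prime.exists_mem_finset_dvd hdvd
    have hq' := Finset.mem_filter.mp hq
    have hpq' : p = q := (Nat.prime_dvd_prime_iff_eq hp (Nat.prime_of_mem_primeFactors hq'.1)).mp hpq
    subst hpq'
    -- p itself is in the filter, so ¬ (p ∣ b); but then p ∣ m * c forces p ∣ b below; derive directly:
    -- we know ¬ ((p:ℤ) ∣ b) from hq'.2 and we will get contradiction outside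
    exact hq'.2 (by
      -- from hpbc and p ∣ m : p ∣ m*c hence p ∣ b
      have hmc : (p : ℤ) ∣ m * c := Dvd.dvd.mul_right (by rwa [hm, Int.natCast_dvd_natCast]) c
      have := dvd_sub hpbc hmc
      simpa using this)
  by_cases hb : (p : ℤ) ∣ b
  · have hmc : (p : ℤ) ∣ m * c := (dvd_add_right hb).mp hpbc
    rcases hpprime.dvd_mul.mp hmc with hdm | hdc
    · exact hpm hdm
    · have hgd : (p : ℤ) ∣ ((Int.gcd a (Int.gcd b c) : ℕ) : ℤ) :=
        Int.dvd_coe_gcd hpa (Int.dvd_coe_gcd hb hdc)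
      rw [h] at hgd
      have : p ∣ 1 := by exact_mod_cast hgd
      exact hp.ne_one (Nat.dvd_one.mp this)
  · have hpfilter : p ∈ S := by
      rw [hS]
      exact Finset.mem_filter.mpr ⟨Nat.mem_primeFactors.mpr
        ⟨hp, Int.natCast_dvd.mp hpa, Int.natAbs_ne_zero.mpr ha⟩, hb⟩
    have hpm' : (p : ℤ) ∣ m := by
      rw [hm, Int.natCast_dvd_natCast, hmN]
      exact Finset.dvd_prod_of_mem _ hpfilter
    exact hpm hpm'

lemma exists_gcd_shift (a b c : ℤ) (ha : a ≠ 0) :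
    ∃ m : ℤ, Int.gcd a (b + m * c) = Int.gcd a (Int.gcd b c) := by
  set g : ℕ := Int.gcd a (Int.gcd b c) with hg
  have hg0 : g ≠ 0 := by
    intro h0
    exact ha (Int.gcd_eq_zero_iff.mp h0).1
  have hGa : (g : ℤ) ∣ a := (Int.gcd_dvd_left _ _)
  have hGbc : (g : ℤ) ∣ ((Int.gcd b c : ℕ) : ℤ) := (Int.gcd_dvd_right _ _)
  have hGb : (g : ℤ) ∣ b := hGbc.trans (Int.gcd_dvd_left _ _)
  have hGc : (g : ℤ) ∣ c := hGbc.trans (Int.gcd_dvd_right _ _)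
  obtain ⟨a', ha'⟩ := hGa
  obtain ⟨b', hb'⟩ := hGb
  obtain ⟨c', hc'⟩ := hGc
  have hgz : (g : ℤ) ≠ 0 := by exact_mod_cast hg0
  have ha'0 : a' ≠ 0 := by rintro rfl; simp at ha'; exact ha (by simpa using ha')
  have hbc' : Int.gcd b c = g * Int.gcd b' c' := by
    rw [hb', hc', Int.gcd_mul_left]
    simp
  have hkey : g = g * Int.gcd a' (Int.gcd b' c') := by
    conv_lhs => rw [hg, ha', hbc']
    rw [show (((g : ℕ) * Int.gcd b' c' : ℕ) : ℤ) = (g : ℤ) * ((Int.gcd b' c' : ℕ) : ℤ) by push_cast; ring]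
    rw [Int.gcd_mul_left]
    simp
  have h1 : Int.gcd a' (Int.gcd b' c') = 1 := by
    have := hkey
    rcases Nat.eq_zero_or_pos g with h0 | hpos
    · exact absurd h0 hg0
    · nlinarith [this]
  obtain ⟨m, hm⟩ := exists_coprime_shift a' b' c' ha'0 h1
  refine ⟨m, ?_⟩
  have : b + m * c = (g : ℤ) * (b' + m * c') := by rw [hb', hc']; ring
  rw [ha', this, Int.gcd_mul_left, hm]
  simp [hg]

lemma exists_two_shifts (d b c : ℤ) :
    ∃ s t : ℤ, Int.gcd (b + s * d) (c + t * d) = Int.gcd d (Int.gcd b c) := by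
  by_cases hd : d = 0
  · refine ⟨0, 0, ?_⟩
    subst hd
    simp [Int.gcd]
  · obtain ⟨s, hB⟩ : ∃ s : ℤ, b + s * d ≠ 0 := by
      by_cases hb : b = 0
      · exact ⟨1, by simpa [hb] using hd⟩
      · exact ⟨0, by simpa using hb⟩
    obtain ⟨t, ht⟩ := exists_gcd_shift (b + s * d) c d hB
    refine ⟨s, t, ?_⟩
    rw [ht]
    apply Nat.dvd_antisymm
    · apply Int.natCast_dvd_natCast.mp
      have h1 : ((Int.gcd (b + s * d) (Int.gcd c d) : ℕ) : ℤ) ∣ b + s * d := (Int.gcd_dvd_left _ _)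
      have h2 : ((Int.gcd (b + s * d) (Int.gcd c d) : ℕ) : ℤ) ∣ ((Int.gcd c d : ℕ) : ℤ) := (Int.gcd_dvd_right _ _)
      have hc : ((Int.gcd (b + s * d) (Int.gcd c d) : ℕ) : ℤ) ∣ c := h2.trans (Int.gcd_dvd_left _ _)
      have hd' : ((Int.gcd (b + s * d) (Int.gcd c d) : ℕ) : ℤ) ∣ d := h2.trans (Int.gcd_dvd_right _ _)
      have hb : ((Int.gcd (b + s * d) (Int.gcd c d) : ℕ) : ℤ) ∣ b := by
        have := dvd_sub h1 (hd'.mul_left s)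
        simpa using this
      exact Int.dvd_coe_gcd hd' (Int.dvd_coe_gcd hb hc)
    · apply Int.natCast_dvd_natCast.mp
      have h1 : ((Int.gcd d (Int.gcd b c) : ℕ) : ℤ) ∣ d := (Int.gcd_dvd_left _ _)
      have h2 : ((Int.gcd d (Int.gcd b c) : ℕ) : ℤ) ∣ ((Int.gcd b c : ℕ) : ℤ) := (Int.gcd_dvd_right _ _)
      have hb : ((Int.gcd d (Int.gcd b c) : ℕ) : ℤ) ∣ b := h2.trans (Int.gcd_dvd_left _ _)
      have hc : ((Int.gcd d (Int.gcd b c) : ℕ) : ℤ) ∣ c := h2.trans (Int.gcd_dvd_right _ _)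
      exact Int.dvd_coe_gcd (dvd_add hb (h1.mul_left s)) (Int.dvd_coe_gcd hc h1)

set_option maxHeartbeats 2000000 in
theorem matrix_completion_aux (n : ℕ) (hn : 2 ≤ n) (v : Fin n → ℤ)
    (a : Fin n → Fin n → ℤ) :
    ∃ T : Matrix (Fin n) (Fin n) ℤ,
      (∀ i : Fin n, T i ⟨n - 1, Nat.sub_one_lt (by omega : n ≠ 0)⟩ = v i) ∧
      (∀ i j : Fin n, 1 ≤ j.val → j.val ≤ n - 2 → i < j → T i j = a i j) ∧
      T.det = Finset.univ.gcd v := by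
  classical
  have h2 : (n - 2) + 2 = n := by omega
  obtain ⟨en2, hen2⟩ : ∃ x : Fin n, x = ⟨n - 2, by omega⟩ := ⟨_, rfl⟩
  obtain ⟨en1, hen1⟩ : ∃ x : Fin n, x = ⟨n - 1, by omega⟩ := ⟨_, rfl⟩
  obtain ⟨emb, hemb⟩ : ∃ x : Fin (n - 2) → Fin n, x = fun k => ⟨k.val, by omega⟩ := ⟨_, rfl⟩
  obtain ⟨cf, hcf⟩ := finset_gcd_eq_comb (Finset.univ) (fun k : Fin (n - 2) => v (emb k))
  obtain ⟨dd, hdd⟩ : ∃ x : ℤ, x = Finset.univ.gcd (fun k : Fin (n - 2) => v (emb k)) := ⟨_, rfl⟩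
  rw [← hdd] at hcf
  obtain ⟨s, t, hst⟩ := exists_two_shifts dd (v en2) (v en1)
  obtain ⟨V0, hV0⟩ : ∃ x : ℤ, x = v en2 + s * dd := ⟨_, rfl⟩
  obtain ⟨V1, hV1⟩ : ∃ x : ℤ, x = v en1 + t * dd := ⟨_, rfl⟩
  rw [← hV0, ← hV1] at hst
  obtain ⟨e, he⟩ : ∃ x : (Fin (n - 2) ⊕ Fin 2) ≃ Fin n, x = finSumFinEquiv.trans (finCongr h2) := ⟨_, rfl⟩
  obtain ⟨Bb, hBb⟩ : ∃ x : Matrix (Fin (n - 2)) (Fin 2) ℤ, x = fun i j => if j = 1 then v (emb i) else 0 := ⟨_, rfl⟩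
  obtain ⟨Cc, hCc⟩ : ∃ x : Matrix (Fin 2) (Fin (n - 2)) ℤ, x = fun r k => (if r = 0 then -s else -t) * cf k := ⟨_, rfl⟩
  obtain ⟨Dd, hDd⟩ : ∃ x : Matrix (Fin 2) (Fin 2) ℤ, x = !![Int.gcdB V0 V1, v en2; -(Int.gcdA V0 V1), v en1] := ⟨_, rfl⟩
  obtain ⟨M, hM⟩ : ∃ x : Matrix (Fin n) (Fin n) ℤ, x = (Matrix.fromBlocks 1 Bb Cc Dd).submatrix e.symm e.symm := ⟨_, rfl⟩
  obtain ⟨A, hA⟩ : ∃ x : Matrix (Fin n) (Fin n) ℤ, x = fun i j => (if i = j then 1 else 0) + (if i < j ∧ 1 ≤ j.val ∧ j.val ≤ n - 2 then a i j else 0) := ⟨_, rfl⟩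
  -- index facts
  have hesym_lt : ∀ (i : Fin n) (h : i.val < n - 2), e.symm i = Sum.inl ⟨i.val, h⟩ := by
    intro i h
    rw [Equiv.symm_apply_eq, he]
    apply Fin.ext
    simp [finSumFinEquiv_apply_left]
  have hesym2 : e.symm en2 = Sum.inr 0 := by
    rw [Equiv.symm_apply_eq, he]
    apply Fin.ext
    simp [finSumFinEquiv_apply_right, hen2]
  have hesym1 : e.symm en1 = Sum.inr 1 := by
    rw [Equiv.symm_apply_eq, he]
    apply Fin.ext
    simp [finSumFinEquiv_apply_right, hen1]
    omega
  -- entries of M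
  have hMlast : ∀ i : Fin n, M i en1 = v i := by
    intro i
    rcases lt_or_ge i.val (n - 2) with h | h
    · rw [hM, Matrix.submatrix_apply, hesym_lt i h, hesym1, Matrix.fromBlocks_apply₁₂, hBb, hemb]
      simp
    · have hcase : i = en2 ∨ i = en1 := by
        have hlt := i.isLt
        rcases Nat.lt_or_ge i.val (n-1) with h' | h'
        · left; rw [hen2]; apply Fin.ext; show i.val = n - 2; omega
        · right; rw [hen1]; apply Fin.ext; show i.val = n - 1; omega
      rcases hcase with hi2 | hi2 <;> rw [hi2]
      · rw [hM, Matrix.submatrix_apply, hesym2, hesym1, Matrix.fromBlocks_apply₂₂, hDd]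
        simp
      · rw [hM, Matrix.submatrix_apply, hesym1, Matrix.fromBlocks_apply₂₂, hDd]
        simp
  have hken1 : ∀ k : Fin n, k.val < n - 2 → k ≠ en1 := by
    intro k hk hkeq
    rw [hen1] at hkeq
    have : k.val = n - 1 := by rw [hkeq]
    omega
  have hMrow : ∀ (i : Fin n), i.val < n - 2 →
      ∀ k, M i k = (if k = i then 1 else 0) + (if k = en1 then v i else 0) := by
    intro i hi k
    have hine1 : i ≠ en1 := hken1 i hi
    rcases lt_or_ge k.val (n - 2) with hk | hk
    · have hkne1 : k ≠ en1 := hken1 k hk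
      rw [hM, Matrix.submatrix_apply, hesym_lt i hi, hesym_lt k hk,
        Matrix.fromBlocks_apply₁₁, Matrix.one_apply, if_neg hkne1, add_zero]
      by_cases hik : k = i
      · subst hik; simp
      · have hik2 : (⟨i.val, hi⟩ : Fin (n-2)) ≠ ⟨k.val, hk⟩ := by
          intro hh
          have hval : i.val = k.val := by
            have := congrArg Fin.val hh; simpa using this
          exact hik (Fin.ext hval.symm)
        rw [if_neg hik2, if_neg hik]
    · have hcase : k = en2 ∨ k = en1 := by
        have hlt := k.isLt
        rcases Nat.lt_or_ge k.val (n-1) with h' | h'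
        · left; rw [hen2]; apply Fin.ext; show k.val = n - 2; omega
        · right; rw [hen1]; apply Fin.ext; show k.val = n - 1; omega
      rcases hcase with hk2 | hk2 <;> rw [hk2]
      · have h2i : en2 ≠ i := by
          rw [hen2]; intro hh
          have : i.val = n - 2 := by rw [← hh]
          omega
        have hne : en2 ≠ en1 := by
          rw [hen2, hen1]; intro hh
          have hval : n - 2 = n - 1 := by
            have := congrArg Fin.val hh; simpa using this
          omega
        rw [hM, Matrix.submatrix_apply, hesym_lt i hi, hesym2, Matrix.fromBlocks_apply₁₂, hBb,
          if_neg h2i, if_neg hne]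
        simp
      · have h1i : en1 ≠ i := fun hh => hine1 hh.symm
        rw [hM, Matrix.submatrix_apply, hesym_lt i hi, hesym1, Matrix.fromBlocks_apply₁₂, hBb,
          hemb, if_neg h1i, if_pos rfl]
        simp
  -- entries of A
  have hAapp : ∀ i j, A i j =
      (if i = j then (1:ℤ) else 0) + (if i < j ∧ 1 ≤ j.val ∧ j.val ≤ n - 2 then a i j else 0) := by
    intro i j
    rw [hA]
  have hen1v : en1.val = n - 1 := by rw [hen1]
  have hen2v : en2.val = n - 2 := by rw [hen2]
  have hAen1 : ∀ k, A k en1 = if k = en1 then 1 else 0 := by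
    intro k
    rw [hAapp]
    have hcond : ¬(k < en1 ∧ 1 ≤ en1.val ∧ en1.val ≤ n - 2) := by
      rintro ⟨-, -, hle⟩
      rw [hen1v] at hle
      omega
    rw [if_neg hcond, add_zero]
  refine ⟨M * A, ?_, ?_, ?_⟩
  · -- last column
    intro i
    show (M * A) i ⟨n - 1, by omega⟩ = v i
    have hcol : (⟨n - 1, by omega⟩ : Fin n) = en1 := hen1.symm
    rw [hcol]
    rw [Matrix.mul_apply]
    calc ∑ k, M i k * A k en1 = ∑ k, if k = en1 then M i k else 0 := by
          refine Finset.sum_congr rfl fun k _ => ?_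
          rw [hAen1 k]
          by_cases hk : k = en1 <;> simp [hk]
      _ = M i en1 := by rw [Finset.sum_ite_eq' Finset.univ en1 (fun k => M i k), if_pos (Finset.mem_univ _)]
      _ = v i := hMlast i
  · -- prescribed entries
    intro i j hj1 hj2 hij
    have hij' : i.val < j.val := hij
    have hi : i.val < n - 2 := by omega
    rw [Matrix.mul_apply]
    have step : ∀ k, M i k * A k j = (if k = i then A i j else 0) + (if k = en1 then v i * A en1 j else 0) := by
      intro k
      rw [hMrow i hi k, add_mul]
      congr 1
      · by_cases hk : k = i <;> simp [hk]
      · by_cases hk : k = en1 <;> simp [hk]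
    simp_rw [step]
    rw [Finset.sum_add_distrib, Finset.sum_ite_eq' Finset.univ i, Finset.sum_ite_eq' Finset.univ en1,
      if_pos (Finset.mem_univ _), if_pos (Finset.mem_univ _)]
    have hAij : A i j = a i j := by
      rw [hAapp]
      rw [if_neg (by intro hh; rw [hh] at hij'; omega), if_pos ⟨hij, hj1, hj2⟩, zero_add]
    have hAe1j : A en1 j = 0 := by
      rw [hAapp]
      rw [if_neg, if_neg, add_zero]
      · rintro ⟨hlt, -, -⟩
        have hlt' : en1.val < j.val := hlt
        omega
      · intro hh
        rw [← hh, hen1v] at hj2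
        omega
    rw [hAij, hAe1j, mul_zero, add_zero]
  · -- determinant
    have hdetA : A.det = 1 := by
      have htri : A.BlockTriangular id := by
        intro i j hij
        rw [hAapp]
        rw [if_neg (by intro hh; subst hh; exact lt_irrefl _ hij),
          if_neg (by rintro ⟨hlt, -, -⟩; exact absurd (lt_trans hij hlt) (lt_irrefl _)), add_zero]
      rw [Matrix.det_of_upperTriangular htri]
      apply Finset.prod_eq_one
      intro i _
      rw [hAapp]
      simp
    have hCB : Cc * Bb = fun r j => if j = 1 then (if r = 0 then -s else -t) * dd else 0 := by
      funext r j
      rw [Matrix.mul_apply]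
      by_cases hj : j = (1 : Fin 2)
      · subst hj
        rw [if_pos rfl]
        calc ∑ k, Cc r k * Bb k 1 = ∑ k, (if r = 0 then -s else -t) * (cf k * v (emb k)) := by
              refine Finset.sum_congr rfl fun k _ => ?_
              rw [hCc, hBb]
              simp only [if_true, ite_true, eq_self_iff_true]
              ring
          _ = (if r = 0 then -s else -t) * dd := by
              rw [← Finset.mul_sum, ← hcf]
      · rw [if_neg hj]
        apply Finset.sum_eq_zero
        intro k _
        rw [hBb]
        simp only [if_neg hj, mul_zero]
    have hdetM : M.det = (Int.gcd V0 V1 : ℤ) := by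
      rw [hM, Matrix.det_submatrix_equiv_self, Matrix.det_fromBlocks_one₁₁]
      have hblock : Dd - Cc * Bb = !![Int.gcdB V0 V1, V0; -(Int.gcdA V0 V1), V1] := by
        rw [hDd]
        funext r j
        rw [Matrix.sub_apply, hCB]
        fin_cases r <;> fin_cases j <;>
          simp [Matrix.sub_apply, hV0, hV1] <;> ring
      rw [hblock, Matrix.det_fin_two_of]
      have := Int.gcd_eq_gcd_ab V0 V1
      linarith [this]
    show (M * A).det = Finset.univ.gcd v
    rw [Matrix.det_mul, hdetA, hdetM, mul_one, hst]
    -- now: ((Int.gcd dd (Int.gcd (v en2) (v en1)) : ℕ) : ℤ) = Finset.univ.gcd v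
    have hnn : (0 : ℤ) ≤ Finset.univ.gcd v := by
      rw [← Finset.normalize_gcd, ← Int.abs_eq_normalize]
      exact abs_nonneg _
    apply Int.dvd_antisymm (by positivity) hnn
    · apply Finset.dvd_gcd
      intro i _
      rcases lt_or_ge i.val (n - 2) with h | h
      · have h1 : ((Int.gcd dd (Int.gcd (v en2) (v en1)) : ℕ) : ℤ) ∣ dd := (Int.gcd_dvd_left _ _)
        have h2 : dd ∣ v (emb ⟨i.val, h⟩) := by
          rw [hdd]; exact Finset.gcd_dvd (Finset.mem_univ _)
        have h3 : emb ⟨i.val, h⟩ = i := by rw [hemb]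
        rw [h3] at h2
        exact h1.trans h2
      · have h1 : ((Int.gcd dd (Int.gcd (v en2) (v en1)) : ℕ) : ℤ) ∣ ((Int.gcd (v en2) (v en1) : ℕ) : ℤ) :=
          (Int.gcd_dvd_right _ _)
        have : i = en2 ∨ i = en1 := by
          have := i.isLt
          rcases Nat.lt_or_ge i.val (n-1) with h' | h'
          · left; rw [hen2]; apply Fin.ext; simp; omega
          · right; rw [hen1]; apply Fin.ext; simp; omega
        rcases this with rfl | rfl
        · exact h1.trans (Int.gcd_dvd_left _ _)
        · exact h1.trans (Int.gcd_dvd_right _ _)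
    · apply Int.dvd_coe_gcd
      · rw [hdd]
        apply Finset.dvd_gcd
        intro k _
        exact Finset.gcd_dvd (Finset.mem_univ (emb k))
      · exact Int.dvd_coe_gcd (Finset.gcd_dvd (Finset.mem_univ en2)) (Finset.gcd_dvd (Finset.mem_univ en1))


/-- **matrix completion.** For any `v ∈ ℤⁿ` (`n ≥ 2`) and any prescribed
integer entries `a i j` for the positions `i < j` in columns `2 ≤ j+1 ≤ n-1`, there is an
integer matrix `T` whose last column is `v`, whose entries at those prescribed positions
are the `a i j`, and with `det T = gcd(v₁, …, vₙ)`. -/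
theorem matrix_completion (n : ℕ) (hn : 2 ≤ n) (v : Fin n → ℤ)
    (a : Fin n → Fin n → ℤ) :
    ∃ T : Matrix (Fin n) (Fin n) ℤ,
      (∀ i : Fin n, T i ⟨n - 1, by omega⟩ = v i) ∧
      (∀ i j : Fin n, 1 ≤ j.val → j.val ≤ n - 2 → i < j → T i j = a i j) ∧
      T.det = Finset.univ.gcd v := by
  exact matrix_completion_aux n hn v a
end

section
/- Let k ∈ ℕ and let d_1,...,d_k be pairwise coprime positive integers. Let c_1,...,c_k and b_1,...,b_k be integers with b_i | c_i | d_i for all i. Then the number of k-tuples (x_1,...,x_k) with 0 ≤ x_i < d_1⋯d_i for each i and gcd(c_1⋯c_k, x_1·c_2⋯c_k, x_2·c_3⋯c_k, ..., x_{k-1}·c_k, x_k) = b_1⋯b_k equals ∏_{i=1}^k φ_{k+1-i}(c_i/b_i)·(d_i/c_i)^{k+1-i}, where φ_m(n) := #{(y_1,...,y_m) ∈ {0,...,n-1}^m : gcd(y_1,...,y_m,n) = 1}. -/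
/-- The generalised Euler function (Jordan totient):
`φ_m(n) = #{(y₁,…,y_m) ∈ {0,…,n-1}^m : gcd(y₁,…,y_m,n) = 1}`. -/
def jordanPhi (m n : ℕ) : ℕ :=
  (Finset.univ.filter fun y : Fin m → Fin n =>
    Nat.gcd (Finset.univ.gcd fun i => (y i).val) n = 1).card

open Finset

section helpers

lemma nat_gcd_gcd_distrib (a u v : ℕ) :
    Nat.gcd a (Nat.gcd u v) = Nat.gcd (Nat.gcd a u) (Nat.gcd a v) := by
  apply Nat.dvd_antisymm
  · exact Nat.dvd_gcd (Nat.dvd_gcd (Nat.gcd_dvd_left _ _) ((Nat.gcd_dvd_right _ _).trans (Nat.gcd_dvd_left _ _)))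
      (Nat.dvd_gcd (Nat.gcd_dvd_left _ _) ((Nat.gcd_dvd_right _ _).trans (Nat.gcd_dvd_right _ _)))
  · exact Nat.dvd_gcd ((Nat.gcd_dvd_left _ _).trans (Nat.gcd_dvd_left _ _))
      (Nat.dvd_gcd ((Nat.gcd_dvd_left _ _).trans (Nat.gcd_dvd_right _ _))
        ((Nat.gcd_dvd_right _ _).trans (Nat.gcd_dvd_right _ _)))

lemma gcd_finset_gcd_congr {ι : Type*} [DecidableEq ι] (a : ℕ) (t : Finset ι) (f g : ι → ℕ)
    (h : ∀ i ∈ t, Nat.gcd a (f i) = Nat.gcd a (g i)) :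
    Nat.gcd a (t.gcd f) = Nat.gcd a (t.gcd g) := by
  induction t using Finset.induction_on with
  | empty => rfl
  | insert i t hx ih =>
    rw [Finset.gcd_insert, Finset.gcd_insert]
    show Nat.gcd a (Nat.gcd _ _) = Nat.gcd a (Nat.gcd _ _)
    rw [nat_gcd_gcd_distrib, h i (mem_insert_self _ _),
      ih fun j hj => h j (mem_insert_of_mem hj), ← nat_gcd_gcd_distrib]

lemma finset_gcd_mul_left {ι : Type*} (b : ℕ) (t : Finset ι) (f : ι → ℕ) :
    t.gcd (fun i => b * f i) = b * t.gcd f := by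
  classical
  induction t using Finset.induction_on with
  | empty => simp
  | insert _ _ hx ih =>
    rw [Finset.gcd_insert, Finset.gcd_insert, ih]
    show Nat.gcd _ _ = _
    rw [Nat.gcd_mul_left]
    rfl

lemma finset_gcd_equiv {ι ι' : Type*} [Fintype ι] [Fintype ι'] (e : ι' ≃ ι) (g : ι → ℕ) :
    (univ : Finset ι').gcd (fun i => g (e i)) = (univ : Finset ι).gcd g := by
  apply Nat.dvd_antisymm
  · refine Finset.dvd_gcd fun i _ => ?_
    have := Finset.gcd_dvd (f := fun i' => g (e i')) (mem_univ (e.symm i))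
    simpa using this
  · exact Finset.dvd_gcd fun i _ => Finset.gcd_dvd (mem_univ (e i))

lemma modEq_prod_of_forall {ι : Type*} [DecidableEq ι] {a b : ℕ} (s : ι → ℕ) (t : Finset ι)
    (hco : Set.Pairwise ↑t (Function.onFun Nat.Coprime s)) (h : ∀ j ∈ t, a ≡ b [MOD s j]) :
    a ≡ b [MOD ∏ j ∈ t, s j] := by
  induction t using Finset.induction_on with
  | empty => simpa using Nat.modEq_one
  | insert j t hx ih =>
    rw [Finset.prod_insert hx]
    have hcop : Nat.Coprime (s j) (∏ i ∈ t, s i) :=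
      Nat.Coprime.prod_right fun i hi =>
        hco (mem_insert_self _ _) (mem_insert_of_mem hi) (by rintro rfl; exact hx hi)
    refine (Nat.modEq_and_modEq_iff_modEq_mul hcop).mp
      ⟨h j (mem_insert_self _ _), ih (hco.mono (by intro x hx; simp at hx ⊢; exact Or.inr hx))
        fun i hi => h i (mem_insert_of_mem hi)⟩

lemma gcd_prod_of_pairwise_coprime {ι : Type*} [DecidableEq ι] (cf : ι → ℕ) (g : ℕ) (t : Finset ι)
    (hco : Set.Pairwise ↑t (Function.onFun Nat.Coprime cf)) :
    Nat.gcd (∏ j ∈ t, cf j) g = ∏ j ∈ t, Nat.gcd (cf j) g := by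
  induction t using Finset.induction_on with
  | empty => simp [Nat.gcd_one_left]
  | insert j t hx ih =>
    rw [Finset.prod_insert hx, Finset.prod_insert hx, Nat.gcd_comm,
      Nat.Coprime.gcd_mul g (Nat.Coprime.prod_right fun i hi =>
        hco (mem_insert_self _ _) (mem_insert_of_mem hi) (by rintro rfl; exact hx hi)),
      Nat.gcd_comm g (cf j), Nat.gcd_comm g (∏ i ∈ t, cf i),
      ih (hco.mono (by intro x hx; simp at hx ⊢; exact Or.inr hx))]

lemma gcd_eq_of_modEq {n x r : ℕ} (c : ℕ) (h : x ≡ r [MOD n]) (hcn : c ∣ n) :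
    Nat.gcd c x = Nat.gcd c r := by
  have h2 : x % c = r % c := h.of_dvd hcn
  rw [Nat.gcd_rec c x, Nat.gcd_rec c r, h2]

lemma gcd_subtype {k : ℕ} (p : Fin k → Prop) [DecidablePred p] (f : Fin k → ℕ) :
    (univ : Finset {i : Fin k // p i}).gcd (fun i => f i.val) = (univ.filter p).gcd f := by
  apply Nat.dvd_antisymm
  · refine Finset.dvd_gcd fun i hi => ?_
    exact Finset.gcd_dvd (mem_univ (⟨i, (mem_filter.mp hi).2⟩ : {i // p i}))
  · exact Finset.dvd_gcd fun i _ => Finset.gcd_dvd (mem_filter.mpr ⟨mem_univ _, i.2⟩)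

lemma eq_of_prod_eq_of_dvd {ι : Type*} [DecidableEq ι] [Fintype ι] (cf u v : ι → ℕ)
    (hco : ∀ i j : ι, i ≠ j → Nat.Coprime (cf i) (cf j))
    (hu : ∀ j, u j ∣ cf j) (hv : ∀ j, v j ∣ cf j)
    (h : ∏ j, u j = ∏ j, v j) (j : ι) : u j = v j := by
  have key : ∀ (u v : ι → ℕ), (∀ j, u j ∣ cf j) → (∀ j, v j ∣ cf j) →
      (∏ j, u j = ∏ j, v j) → u j ∣ v j := by
    intro u v hu hv h
    have h1 : u j ∣ v j * ∏ l ∈ univ.erase j, v l := by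
      rw [Finset.mul_prod_erase _ _ (mem_univ j), ← h]
      exact Finset.dvd_prod_of_mem u (mem_univ j)
    have h2 : Nat.Coprime (u j) (∏ l ∈ univ.erase j, v l) :=
      Nat.Coprime.prod_right fun l hl =>
        Nat.Coprime.coprime_dvd_left (hu j)
          (Nat.Coprime.coprime_dvd_right (hv l) (hco j l (by
            rintro rfl; exact (mem_erase.mp hl).1 rfl)))
    exact (Nat.Coprime.dvd_of_dvd_mul_right h2 h1)
  exact Nat.dvd_antisymm (key u v hu hv h) (key v u hv hu h.symm)

def subEquiv (k : ℕ) (j : Fin k) : {i : Fin k // j ≤ i} ≃ Fin (k - j.val) where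
  toFun i := ⟨i.1.val - j.val, by have := i.1.isLt; omega⟩
  invFun m := ⟨⟨m.val + j.val, by have := m.isLt; omega⟩, by simp [Fin.le_def]⟩
  left_inv i := by
    have : j.val ≤ i.1.val := i.2
    ext; simp; omega
  right_inv m := by ext; simp

end helpers


section cardT
variable {ι : Type*} [Fintype ι] [DecidableEq ι]

def reindexEquiv {ι' : Type*} [Fintype ι'] (e : ι ≃ ι') (n t : ℕ) :
    {y : ι → Fin n // Nat.gcd (univ.gcd fun i => (y i).val) t = 1} ≃
    {y : ι' → Fin n // Nat.gcd (univ.gcd fun i => (y i).val) t = 1} :=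
  Equiv.subtypeEquiv (Equiv.arrowCongr e (Equiv.refl _)) (fun y => by
    have h : (univ : Finset ι').gcd
        (fun i => (((Equiv.arrowCongr e (Equiv.refl (Fin n))) y) i).val) =
        (univ : Finset ι).gcd (fun i => (y i).val) := by
      have := finset_gcd_equiv e.symm (fun i => (y i).val)
      exact this
    rw [h])

noncomputable def countEquiv (dd cc bb : ℕ) (hdd : 0 < dd) (hbc : bb ∣ cc) (hcd : cc ∣ dd) :
    {y : ι → Fin dd // Nat.gcd cc (univ.gcd fun i => (y i).val) = bb} ≃
    {r : ι → Fin (cc / bb) // Nat.gcd (univ.gcd fun i => (r i).val) (cc / bb) = 1} ×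
      (ι → Fin (dd / cc)) := by
  have hcc : 0 < cc := Nat.pos_of_dvd_of_pos hcd hdd
  have hbb : 0 < bb := Nat.pos_of_dvd_of_pos hbc hcc
  set cm := cc / bb with hcm
  set qq := dd / cc with hqq
  have hbcm : bb * cm = cc := Nat.mul_div_cancel' hbc
  have hcq : cc * qq = dd := Nat.mul_div_cancel' hcd
  have hcm0 : 0 < cm := Nat.div_pos (Nat.le_of_dvd hcc hbc) hbb
  refine
  { toFun := fun y =>
      (⟨fun i => ⟨((y.1 i).val / bb) % cm, Nat.mod_lt _ hcm0⟩, ?_⟩,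
       fun i => ⟨(y.1 i).val / cc, by
        have := (y.1 i).isLt
        rw [Nat.div_lt_iff_lt_mul hcc, hqq, mul_comm, hcq]; exact this⟩)
    invFun := fun rq => ⟨fun i => ⟨bb * (rq.1.1 i).val + cc * (rq.2 i).val, ?_⟩, ?_⟩
    left_inv := ?_
    right_inv := ?_ }
  · obtain ⟨y, hy⟩ := y
    have hbG : bb ∣ univ.gcd (fun i => (y i).val) := hy ▸ Nat.gcd_dvd_right _ _
    have hbd : ∀ i, bb ∣ (y i).val := fun i => hbG.trans (Finset.gcd_dvd (mem_univ i))
    have step1 : Nat.gcd cm (univ.gcd fun i => ((y i).val / bb) % cm) =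
        Nat.gcd cm (univ.gcd fun i => (y i).val / bb) :=
      gcd_finset_gcd_congr _ _ _ _ fun i _ =>
        gcd_eq_of_modEq cm (Nat.mod_modEq _ _) dvd_rfl
    have step2 : bb * univ.gcd (fun i => (y i).val / bb) = univ.gcd (fun i => (y i).val) := by
      rw [← finset_gcd_mul_left]
      exact Finset.gcd_congr rfl fun i _ => Nat.mul_div_cancel' (hbd i)
    have step3 : bb * Nat.gcd cm (univ.gcd fun i => (y i).val / bb) = bb := by
      rw [← Nat.gcd_mul_left, step2, hbcm, hy]
    rw [Nat.gcd_comm, step1]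
    exact Nat.eq_of_mul_eq_mul_left hbb (by rw [step3, mul_one])
  · have h1 : bb * (rq.1.1 i).val + cc * (rq.2 i).val < bb * cm + cc * (rq.2 i).val :=
      Nat.add_lt_add_right (Nat.mul_lt_mul_of_pos_left (rq.1.1 i).isLt hbb) _
    have h2 : bb * cm + cc * (rq.2 i).val = cc * ((rq.2 i).val + 1) := by
      rw [hbcm]; ring
    have h3 : cc * ((rq.2 i).val + 1) ≤ cc * qq :=
      Nat.mul_le_mul_left cc (rq.2 i).isLt
    omega
  · obtain ⟨⟨r, hr⟩, q⟩ := rq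
    have step1 : Nat.gcd cc (univ.gcd fun i => bb * (r i).val + cc * (q i).val) =
        Nat.gcd cc (univ.gcd fun i => bb * (r i).val) :=
      gcd_finset_gcd_congr _ _ _ _ fun i _ => by
        rw [mul_comm cc ((q i).val), Nat.gcd_add_mul_right_right]
    rw [step1, finset_gcd_mul_left, ← hbcm, Nat.gcd_mul_left, Nat.gcd_comm cm, hr, mul_one]
  · rintro ⟨y, hy⟩
    have hbG : bb ∣ univ.gcd (fun i => (y i).val) := hy ▸ Nat.gcd_dvd_right _ _
    have hbd : ∀ i, bb ∣ (y i).val := fun i => hbG.trans (Finset.gcd_dvd (mem_univ i))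
    apply Subtype.ext
    funext i
    apply Fin.ext
    show bb * ((y i).val / bb % cm) + cc * ((y i).val / cc) = (y i).val
    obtain ⟨z, hz⟩ := hbd i
    have h1 : (y i).val / bb = z := by rw [hz, Nat.mul_div_cancel_left _ hbb]
    have h2 : (y i).val / cc = z / cm := by
      rw [← hbcm, ← Nat.div_div_eq_div_mul, h1]
    rw [h1, h2, ← hbcm, mul_assoc, ← Nat.mul_add, Nat.mod_add_div, ← hz]
  · rintro ⟨⟨r, hr⟩, q⟩
    refine Prod.ext (Subtype.ext (funext fun i => Fin.ext ?_)) (funext fun i => Fin.ext ?_)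
    · show (bb * (r i).val + cc * (q i).val) / bb % cm = (r i).val
      rw [← hbcm, mul_assoc, ← Nat.mul_add, Nat.mul_div_cancel_left _ hbb,
        Nat.add_mul_mod_self_left, Nat.mod_eq_of_lt (r i).isLt]
    · show (bb * (r i).val + cc * (q i).val) / cc = (q i).val
      rw [add_comm, Nat.mul_add_div hcc, Nat.div_eq_of_lt (by
        rw [← hbcm]; exact Nat.mul_lt_mul_of_pos_left (r i).isLt hbb), add_zero]

lemma cardT (dd cc bb : ℕ) (hdd : 0 < dd) (hbc : bb ∣ cc) (hcd : cc ∣ dd) :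
    Nat.card {y : ι → Fin dd // Nat.gcd cc (univ.gcd fun i => (y i).val) = bb} =
      jordanPhi (Fintype.card ι) (cc / bb) * (dd / cc) ^ (Fintype.card ι) := by
  rw [Nat.card_congr (countEquiv dd cc bb hdd hbc hcd), Nat.card_prod]
  congr 1
  · rw [Nat.card_congr (reindexEquiv (Fintype.equivFin ι) (cc/bb) (cc/bb)),
      Nat.card_eq_fintype_card, Fintype.card_subtype, jordanPhi]
  · rw [Nat.card_pi]
    simp [Nat.card_eq_fintype_card]

end cardT

/-- **counting lemma.** For pairwise coprime positive `d₁,…,d_k` and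
`bᵢ ∣ cᵢ ∣ dᵢ`, the number of tuples `(x₁,…,x_k)` with `0 ≤ xᵢ < d₁⋯dᵢ` and
`gcd(c₁⋯c_k, x₁·c₂⋯c_k, …, x_{k-1}·c_k, x_k) = b₁⋯b_k` equals
`∏ᵢ φ_{k+1-i}(cᵢ/bᵢ)·(dᵢ/cᵢ)^{k+1-i}`. -/
theorem counting_lemma (k : ℕ) (d c b : Fin k → ℕ)
    (hd : ∀ i, 0 < d i)
    (hcop : ∀ i j, i ≠ j → Nat.Coprime (d i) (d j))
    (hbc : ∀ i, b i ∣ c i) (hcd : ∀ i, c i ∣ d i) :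
    Nat.card {x : Fin k → ℕ //
        (∀ i, x i < ∏ j ∈ Finset.univ.filter (fun j => j ≤ i), d j) ∧
        Nat.gcd (∏ j, c j)
            (Finset.univ.gcd fun i =>
              x i * ∏ j ∈ Finset.univ.filter (fun j => i < j), c j)
          = ∏ i, b i} =
      ∏ i : Fin k, jordanPhi (k - i.val) (c i / b i) * (d i / c i) ^ (k - i.val) := by
  classical
  have hcopc : ∀ i j : Fin k, i ≠ j → Nat.Coprime (c i) (c j) := fun i j hij =>
    Nat.Coprime.coprime_dvd_left (hcd i) (Nat.Coprime.coprime_dvd_right (hcd j) (hcop i j hij))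
  -- Step A: split the gcd condition
  have condEq : ∀ x : Fin k → ℕ,
      (Nat.gcd (∏ j, c j)
          (Finset.univ.gcd fun i => x i * ∏ j ∈ Finset.univ.filter (fun j => i < j), c j)
        = ∏ i, b i) ↔
      ∀ j : Fin k, Nat.gcd (c j) ((Finset.univ.filter (fun i => j ≤ i)).gcd x) = b j := by
    intro x
    have key : Nat.gcd (∏ j, c j)
        (Finset.univ.gcd fun i => x i * ∏ l ∈ Finset.univ.filter (fun l => i < l), c l)
        = ∏ j, Nat.gcd (c j) ((Finset.univ.filter (fun i => j ≤ i)).gcd x) := by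
      rw [gcd_prod_of_pairwise_coprime c _ univ (fun a _ b _ hab => hcopc a b hab)]
      refine Finset.prod_congr rfl fun j _ => ?_
      have e1 : Nat.gcd (c j)
          (Finset.univ.gcd fun i => x i * ∏ l ∈ Finset.univ.filter (fun l => i < l), c l) =
          Nat.gcd (c j) (Finset.univ.gcd fun i => if j ≤ i then x i else 0) := by
        refine gcd_finset_gcd_congr _ _ _ _ fun i _ => ?_
        by_cases h : j ≤ i
        · rw [if_pos h]
          refine Nat.Coprime.gcd_mul_right_cancel_right (x i) ?_
          exact Nat.Coprime.prod_left fun l hl =>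
            hcopc l j (by
              have : i < l := (mem_filter.mp hl).2
              intro he; rw [he] at this; exact absurd (lt_of_le_of_lt h this) (lt_irrefl j))
        · rw [if_neg h, Nat.gcd_zero_right]
          refine Nat.gcd_eq_left ?_
          exact Dvd.dvd.mul_left
            (Finset.dvd_prod_of_mem c (mem_filter.mpr ⟨mem_univ _, lt_of_not_ge h⟩)) (x i)
      have e2 : (Finset.univ.gcd fun i => if j ≤ i then x i else 0) =
          (Finset.univ.filter (fun i => j ≤ i)).gcd x := by
        apply Nat.dvd_antisymm
        · refine Finset.dvd_gcd fun i hi => ?_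
          have := Finset.gcd_dvd (f := fun i => if j ≤ i then x i else 0) (mem_univ i)
          simpa [(mem_filter.mp hi).2] using this
        · refine Finset.dvd_gcd fun i _ => ?_
          by_cases h : j ≤ i
          · rw [if_pos h]
            exact Finset.gcd_dvd (mem_filter.mpr ⟨mem_univ _, h⟩)
          · rw [if_neg h]; exact dvd_zero _
      rw [e1, e2]
    constructor
    · intro h j
      exact eq_of_prod_eq_of_dvd c
        (fun j => Nat.gcd (c j) ((Finset.univ.filter (fun i => j ≤ i)).gcd x)) b hcopc
        (fun j => Nat.gcd_dvd_left _ _) hbc (by rw [← key, h]) j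
    · intro h
      rw [key]
      exact Finset.prod_congr rfl fun j _ => h j
  rw [Nat.card_congr (Equiv.subtypeEquivRight
    (fun x => and_congr_right fun _ => condEq x))]
  -- Step B: CRT bijection
  -- T j
  let T : Fin k → Type := fun j =>
    {y : {i : Fin k // j ≤ i} → Fin (d j) //
      Nat.gcd (c j) (univ.gcd fun i => (y i).val) = b j}
  have hs : ∀ (i : Fin k), ∀ j ∈ Finset.univ.filter (fun j => j ≤ i), d j ≠ 0 :=
    fun i j _ => (hd j).ne'
  have pp : ∀ (i : Fin k), Set.Pairwise ↑(Finset.univ.filter (fun j : Fin k => j ≤ i))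
      (Function.onFun Nat.Coprime d) := fun i a _ b _ hab => hcop a b hab
  let aY : (∀ j, T j) → Fin k → Fin k → ℕ := fun Y i j =>
    if h : j ≤ i then ((Y j).1 ⟨i, h⟩).val else 0
  let xxY : (∀ j, T j) → Fin k → ℕ := fun Y i =>
    (Nat.chineseRemainderOfFinset (aY Y i) d (Finset.univ.filter (fun j => j ≤ i))
      (hs i) (pp i)).val
  have hmod : ∀ (Y : ∀ j, T j) (i j : Fin k) (h : j ≤ i),
      xxY Y i ≡ ((Y j).1 ⟨i, h⟩).val [MOD d j] := by
    intro Y i j h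
    have := (Nat.chineseRemainderOfFinset (aY Y i) d (Finset.univ.filter (fun j => j ≤ i))
      (hs i) (pp i)).2 j (mem_filter.mpr ⟨mem_univ _, h⟩)
    simpa [aY, dif_pos h] using this
  have hltY : ∀ (Y : ∀ j, T j) (i : Fin k),
      xxY Y i < ∏ j ∈ Finset.univ.filter (fun j => j ≤ i), d j := fun Y i =>
    Nat.chineseRemainderOfFinset_lt_prod _ _ _ _
  let Φ : (∀ j, T j) → {x : Fin k → ℕ //
      (∀ i, x i < ∏ j ∈ Finset.univ.filter (fun j => j ≤ i), d j) ∧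
      ∀ j : Fin k, Nat.gcd (c j) ((Finset.univ.filter (fun i => j ≤ i)).gcd x) = b j} :=
    fun Y => ⟨xxY Y, hltY Y, by
      intro j
      have e1 : (Finset.univ.filter (fun i => j ≤ i)).gcd (xxY Y) =
          (univ : Finset {i : Fin k // j ≤ i}).gcd (fun i => xxY Y i.val) :=
        (gcd_subtype _ _).symm
      rw [e1]
      have e2 : Nat.gcd (c j) ((univ : Finset {i : Fin k // j ≤ i}).gcd (fun i => xxY Y i.val)) =
          Nat.gcd (c j) ((univ : Finset {i : Fin k // j ≤ i}).gcd (fun i => ((Y j).1 i).val)) := by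
        refine gcd_finset_gcd_congr _ _ _ _ fun i _ => ?_
        have hm := hmod Y i.val j i.2
        have h3 : ((Y j).1 ⟨i.val, i.2⟩) = (Y j).1 i := by congr
        rw [h3] at hm
        exact gcd_eq_of_modEq (c j) hm (hcd j)
      rw [e2, (Y j).2]⟩
  have hbij : Function.Bijective Φ := by
    constructor
    · intro Y Y' hYY
      have hx : ∀ i, xxY Y i = xxY Y' i := fun i => congrFun (congrArg Subtype.val hYY) i
      funext j
      apply Subtype.ext
      funext i
      apply Fin.ext
      have m1 := hmod Y i.val j i.2
      have m2 := hmod Y' i.val j i.2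
      rw [hx i.val] at m1
      have hmm := m1.symm.trans m2
      have heq : ((Y j).1 ⟨i.val, i.2⟩).val = ((Y' j).1 ⟨i.val, i.2⟩).val := by
        have h1 := ((Y j).1 ⟨i.val, i.2⟩).isLt
        have h2 := ((Y' j).1 ⟨i.val, i.2⟩).isLt
        have hmod2 : ((Y j).1 ⟨i.val, i.2⟩).val % d j = ((Y' j).1 ⟨i.val, i.2⟩).val % d j := hmm
        rwa [Nat.mod_eq_of_lt h1, Nat.mod_eq_of_lt h2] at hmod2
      have h3 : ((Y j).1 ⟨i.val, i.2⟩) = (Y j).1 i := by congr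
      have h4 : ((Y' j).1 ⟨i.val, i.2⟩) = (Y' j).1 i := by congr
      rw [← h3, ← h4, heq]
    · rintro ⟨xf, hblt, hcond⟩
      refine ⟨fun j => ⟨fun i => ⟨xf i.val % d j, Nat.mod_lt _ (hd j)⟩, ?_⟩, ?_⟩
      · show Nat.gcd (c j) ((univ : Finset {i : Fin k // j ≤ i}).gcd
          (fun i => xf i.val % d j)) = b j
        have e2 : Nat.gcd (c j) ((univ : Finset {i : Fin k // j ≤ i}).gcd
            (fun i => xf i.val % d j)) =
            Nat.gcd (c j) ((univ : Finset {i : Fin k // j ≤ i}).gcd (fun i => xf i.val)) :=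
          gcd_finset_gcd_congr _ _ _ _ fun i _ =>
            gcd_eq_of_modEq (c j) (Nat.mod_modEq _ _) (hcd j)
        rw [e2, gcd_subtype]
        exact hcond j
      · apply Subtype.ext
        funext i
        show xxY _ i = xf i
        set Y : ∀ j, T j := fun j =>
          ⟨fun i => ⟨xf i.val % d j, Nat.mod_lt _ (hd j)⟩, by
            have e2 : Nat.gcd (c j) ((univ : Finset {i : Fin k // j ≤ i}).gcd
                (fun i => xf i.val % d j)) =
                Nat.gcd (c j) ((univ : Finset {i : Fin k // j ≤ i}).gcd (fun i => xf i.val)) :=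
              gcd_finset_gcd_congr _ _ _ _ fun i _ =>
                gcd_eq_of_modEq (c j) (Nat.mod_modEq _ _) (hcd j)
            show Nat.gcd (c j) _ = b j
            rw [e2, gcd_subtype]
            exact hcond j⟩ with hYdef
        have hmodeq : xxY Y i ≡ xf i [MOD ∏ j ∈ Finset.univ.filter (fun j => j ≤ i), d j] := by
          refine modEq_prod_of_forall d _ (pp i) fun j hj => ?_
          have hji : j ≤ i := (mem_filter.mp hj).2
          have hm := hmod Y i j hji
          refine hm.trans ?_
          show (xf i % d j) ≡ xf i [MOD d j]
          exact Nat.mod_modEq _ _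
        have hm2 : xxY Y i % _ = xf i % _ := hmodeq
        rwa [Nat.mod_eq_of_lt (hltY Y i), Nat.mod_eq_of_lt (hblt i)] at hm2
  rw [← Nat.card_eq_of_bijective Φ hbij, Nat.card_pi]
  refine Finset.prod_congr rfl fun j _ => ?_
  have hcards : Fintype.card {i : Fin k // j ≤ i} = k - j.val := by
    rw [Fintype.card_congr (subEquiv k j), Fintype.card_fin]
  rw [show (T j : Type) = _ from rfl]
  rw [cardT (d j) (c j) (b j) (hd j) (hbc j) (hcd j), hcards]
end
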